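/- Let ψ be a strict Archimedean generator (i.e., ψ(t) > 0 for all t ≥ 0, so ψ^{−1}(0) = ∞), let (η_n) be positive reals with η_n → ∞, assume 1 − ψ(1/·) is regularly varying at ∞ with index −ρ for some ρ ∈ (0,1], and define r_n = 1/(1 − ψ(1/η_n)). Suppose η_{⌈nt⌉}/η_n → κ(t) as n → ∞ for every t > 0, where κ : (0,∞) → (0,∞) is a bijection. Then r_{⌈nt⌉}/r_n → κ(t)^ρ as n → ∞ for every t > 0. Moreover, if F is a continuous distribution function on ℝ, δ_n(u) = ψ(η_n ψ^{−1}(u)) (with δ_n(0) = 0), and there exist sequences (c_n), c_n > 0, and (d_n) and a nondegenerate distribution function G with δ_n(F(c_n x + d_n)) → G(x) at every continuity point x of G, then G = D ∘ H where D(u) = ψ((−log u)^{1/ρ}) and H is a GEV distribution function. (Proposition on uniqueness of Archimax limits.) -/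

import Mathlib

open Filter Set Topology
open scoped ENNReal

/-- The generalized extreme value (GEV) distribution function `H_{ξ,μ,σ}`. -/
noncomputable def GEVcdf (ξ μ σ : ℝ) : ℝ → ℝ := fun x =>
  if ξ = 0 then Real.exp (-Real.exp (-(x - μ) / σ))
  else if 0 < 1 + ξ * (x - μ) / σ then Real.exp (-(1 + ξ * (x - μ) / σ) ^ (-1 / ξ))
  else if 0 < ξ then 0 else 1

/-- A distribution function is GEV if it equals some `H_{ξ,μ,σ}` with `σ > 0`. -/
def IsGEV (H : ℝ → ℝ) : Prop := ∃ ξ μ σ : ℝ, 0 < σ ∧ H = GEVcdf ξ μ σ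

/-- A distribution function on `ℝ`: nondecreasing, right-continuous, with limits 0 at `-∞`
and 1 at `∞`, taking values in `[0,1]`. -/
def IsDistFun (F : ℝ → ℝ) : Prop :=
  Monotone F ∧ (∀ x, ContinuousWithinAt F (Ici x) x) ∧
    Tendsto F atBot (nhds 0) ∧ Tendsto F atTop (nhds 1) ∧ ∀ x, F x ∈ Icc (0:ℝ) 1

/-- The properties of the diagonal `u ↦ C_n(u,…,u)` of an `n`-dimensional copula. -/
def IsCopulaDiagonal (n : ℕ) (δ : ℝ → ℝ) : Prop :=
  δ 0 = 0 ∧ δ 1 = 1 ∧ MonotoneOn δ (Icc 0 1) ∧ (∀ u ∈ Icc (0:ℝ) 1, δ u ≤ u) ∧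
    ∀ u ∈ Icc (0:ℝ) 1, ∀ v ∈ Icc (0:ℝ) 1, |δ u - δ v| ≤ (n : ℝ) * |u - v|

/-- A distribution function on `[0,1]`: nondecreasing, right-continuous, `D(0)=0`, `D(1)=1`,
with values in `[0,1]`. -/
def IsDistFun01 (D : ℝ → ℝ) : Prop :=
  D 0 = 0 ∧ D 1 = 1 ∧ MonotoneOn D (Icc 0 1) ∧
    (∀ u ∈ Ico (0:ℝ) 1, ContinuousWithinAt D (Icc u 1) u) ∧
    ∀ u ∈ Icc (0:ℝ) 1, D u ∈ Icc (0:ℝ) 1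

/-- A degenerate distribution function `x ↦ 1_{[a,∞)}(x)`. -/
noncomputable def IsDegenerateDF (G : ℝ → ℝ) : Prop :=
  ∃ a : ℝ, ∀ x, G x = if a ≤ x then 1 else 0

/-- An Archimedean generator: continuous on `[0,∞)`, `ψ(0)=1`, values in `[0,1]`,
`ψ(t) → 0` as `t → ∞`, strictly decreasing on `[0, inf{x : ψ(x)=0}]` (equivalently,
strictly decreasing as long as it is positive). -/
def IsArchimedeanGenerator (ψ : ℝ → ℝ) : Prop :=
  ContinuousOn ψ (Ici 0) ∧ ψ 0 = 1 ∧ (∀ t ∈ Ici (0:ℝ), ψ t ∈ Icc (0:ℝ) 1) ∧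
    Tendsto ψ atTop (nhds 0) ∧
    ∀ s t : ℝ, 0 ≤ s → s < t → 0 < ψ s → ψ t < ψ s

set_option linter.unusedSectionVars false
namespace Archimax

variable {ψ ψinv : ℝ → ℝ} {η : ℕ → ℝ} {ρ : ℝ}

lemma psi_strictAnti (hψ : IsArchimedeanGenerator ψ) (hstrict : ∀ t : ℝ, 0 ≤ t → 0 < ψ t) :
    StrictAntiOn ψ (Ici 0) := fun s hs t _ hst => hψ.2.2.2.2 s t hs hst (hstrict s hs)

lemma psi_anti (hψ : IsArchimedeanGenerator ψ) (hstrict : ∀ t : ℝ, 0 ≤ t → 0 < ψ t) :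
    AntitoneOn ψ (Ici 0) := (psi_strictAnti hψ hstrict).antitoneOn

/-- inverse continuity, sequence form -/
lemma tendsto_of_psi_tendsto (hψ : IsArchimedeanGenerator ψ)
    (hstrict : ∀ t : ℝ, 0 ≤ t → 0 < ψ t)
    (hψinv : ∀ u ∈ Ioc (0:ℝ) 1, 0 ≤ ψinv u ∧ ψ (ψinv u) = u)
    {α : Type*} {l : Filter α}
    {t : α → ℝ} (ht : ∀ᶠ n in l, 0 ≤ t n) {L : ℝ} (hL : L ∈ Ioc (0:ℝ) 1)
    (hconv : Tendsto (fun n => ψ (t n)) l (𝓝 L)) :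
    Tendsto t l (𝓝 (ψinv L)) := by
  obtain ⟨h0, hψt0⟩ := hψinv L hL
  set t0 := ψinv L with ht0
  rw [tendsto_order]
  constructor
  · intro a ha
    rcases lt_or_ge a 0 with h | h
    · filter_upwards [ht] with n hn; linarith
    · have hmid : (a + t0) / 2 ∈ Ici (0:ℝ) := by
        simp only [mem_Ici]; linarith
      have hml : ψ ((a + t0)/2) > ψ t0 := by
        apply psi_strictAnti hψ hstrict hmid (by simp [mem_Ici, h0]) (by linarith)
      rw [hψt0] at hml
      have hev : ∀ᶠ n in l, ψ (t n) < ψ ((a + t0)/2) :=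
        hconv.eventually (eventually_lt_nhds hml)
      filter_upwards [hev, ht] with n hn hn0
      by_contra hcon
      push_neg at hcon
      have : ψ ((a + t0)/2) ≤ ψ (t n) :=
        psi_anti hψ hstrict (by simp [mem_Ici, hn0]) hmid (by linarith)
      linarith
  · intro a ha
    have hmid : (t0 + a) / 2 ∈ Ici (0:ℝ) := by
      simp only [mem_Ici]; linarith
    have hml : ψ ((t0 + a)/2) < ψ t0 :=
      psi_strictAnti hψ hstrict (by simp [mem_Ici, h0]) hmid (by linarith)
    rw [hψt0] at hml
    have hev : ∀ᶠ n in l, ψ ((t0 + a)/2) < ψ (t n) :=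
      hconv.eventually (eventually_gt_nhds hml)
    filter_upwards [hev, ht] with n hn hn0
    by_contra hcon
    push_neg at hcon
    have : ψ (t n) ≤ ψ ((t0 + a)/2) :=
      psi_anti hψ hstrict hmid (by simp [mem_Ici, hn0]) (by linarith)
    linarith


/-- if ψ(t n) → 0 then t n → ∞ -/
lemma tendsto_top_of_psi_tendsto (hψ : IsArchimedeanGenerator ψ)
    (hstrict : ∀ t : ℝ, 0 ≤ t → 0 < ψ t)
    {α : Type*} {l : Filter α}
    {t : α → ℝ} (ht : ∀ᶠ n in l, 0 ≤ t n)
    (hconv : Tendsto (fun n => ψ (t n)) l (𝓝 0)) :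
    Tendsto t l atTop := by
  rw [tendsto_atTop]
  intro M
  set M' := max M 0 with hM'
  have hψM : 0 < ψ M' := hstrict M' (le_max_right _ _)
  have hev : ∀ᶠ n in l, ψ (t n) < ψ M' := hconv.eventually (eventually_lt_nhds hψM)
  filter_upwards [hev, ht] with n hn hn0
  by_contra hcon
  push_neg at hcon
  have : ψ M' ≤ ψ (t n) :=
    psi_anti hψ hstrict (by simp [mem_Ici, hn0]) (le_max_right M 0) (by linarith [le_max_left M 0])
  linarith

noncomputable def tailf (ψ : ℝ → ℝ) (x : ℝ) : ℝ := 1 - ψ (1/x)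

lemma tailf_pos (hψ : IsArchimedeanGenerator ψ) (hstrict : ∀ t : ℝ, 0 ≤ t → 0 < ψ t)
    {x : ℝ} (hx : 0 < x) : 0 < tailf ψ x := by
  have : ψ (1/x) < ψ 0 :=
    psi_strictAnti hψ hstrict (mem_Ici.2 (le_refl (0:ℝ))) (mem_Ici.2 (by positivity)) (by positivity)
  rw [hψ.2.1] at this
  simp only [tailf]; linarith

lemma tailf_le_one (hψ : IsArchimedeanGenerator ψ) {x : ℝ} (hx : 0 < x) :
    tailf ψ x ≤ 1 := by
  have := (hψ.2.2.1 (1/x) (mem_Ici.2 (by positivity))).1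
  simp only [tailf]; linarith

lemma tailf_anti (hψ : IsArchimedeanGenerator ψ) (hstrict : ∀ t : ℝ, 0 ≤ t → 0 < ψ t) :
    AntitoneOn (tailf ψ) (Ioi 0) := by
  intro x hx y hy hxy
  simp only [tailf]
  have h1 : ψ (1/y) ≥ ψ (1/x) := by
    apply psi_anti hψ hstrict (mem_Ici.2 (le_of_lt (by simp at hy ⊢; positivity)))
      (mem_Ici.2 (le_of_lt (by simp at hx ⊢; positivity)))
    apply one_div_le_one_div_of_le (by simpa using hx) hxy
  linarith

lemma RVlimit (hηtop : Tendsto η atTop atTop)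
    (hRV : ∀ lam : ℝ, 0 < lam →
      Tendsto (fun t : ℝ => (1 - ψ (1 / (lam * t))) / (1 - ψ (1 / t))) atTop
        (nhds (lam ^ (-ρ))))
    {lam : ℝ} (hlam : 0 < lam) :
    Tendsto (fun n => tailf ψ (lam * η n) / tailf ψ (η n)) atTop (𝓝 (lam ^ (-ρ))) := by
  have := (hRV lam hlam).comp hηtop
  simpa only [Function.comp_def, tailf] using this

lemma RVsandwich (hψ : IsArchimedeanGenerator ψ) (hstrict : ∀ t : ℝ, 0 ≤ t → 0 < ψ t)
    (hη : ∀ n, 0 < η n) (hηtop : Tendsto η atTop atTop)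
    (hRV : ∀ lam : ℝ, 0 < lam →
      Tendsto (fun t : ℝ => (1 - ψ (1 / (lam * t))) / (1 - ψ (1 / t))) atTop
        (nhds (lam ^ (-ρ))))
    {s : ℕ → ℝ} {c : ℝ} (hc : 0 < c)
    (hs : Tendsto (fun n => s n / η n) atTop (𝓝 c)) :
    Tendsto (fun n => tailf ψ (s n) / tailf ψ (η n)) atTop (𝓝 (c ^ (-ρ))) := by
  have hspos : ∀ᶠ n in atTop, 0 < s n := by
    filter_upwards [hs.eventually (eventually_gt_nhds (half_lt_self hc))] with n hn
    have h2 : 0 < s n / η n * η n := mul_pos (lt_trans (half_pos hc) hn) (hη n)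
    rwa [div_mul_cancel₀ _ (hη n).ne'] at h2
  have hcont : ContinuousAt (fun x : ℝ => x ^ (-ρ)) c :=
    Real.continuousAt_rpow_const c (-ρ) (Or.inl hc.ne')
  rw [tendsto_order]
  constructor
  · intro a ha
    have h1 : ∀ᶠ y in 𝓝 c, a < y ^ (-ρ) := hcont.eventually (eventually_gt_nhds ha)
    obtain ⟨ε, hε, hball⟩ := Metric.eventually_nhds_iff.1 h1
    set lam := c + ε/2 with hlam
    have hlc : c < lam := by simp only [hlam]; linarith
    have hlampos : 0 < lam := by linarith
    have halam : a < lam ^ (-ρ) := by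
      apply hball
      rw [Real.dist_eq, hlam]
      rw [show c + ε / 2 - c = ε / 2 by ring, abs_of_pos (by linarith)]
      linarith
    have hRVl := RVlimit hηtop hRV hlampos
    have hev2 : ∀ᶠ n in atTop, a < tailf ψ (lam * η n) / tailf ψ (η n) :=
      hRVl.eventually (eventually_gt_nhds halam)
    have hev3 : ∀ᶠ n in atTop, s n / η n < lam := hs.eventually (eventually_lt_nhds hlc)
    filter_upwards [hev2, hev3, hspos] with n h2 h3 hsp
    have hsl : s n ≤ lam * η n := by
      rw [div_lt_iff₀ (hη n)] at h3; linarith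
    have hmono : tailf ψ (lam * η n) ≤ tailf ψ (s n) :=
      tailf_anti hψ hstrict (mem_Ioi.2 hsp) (mem_Ioi.2 (mul_pos hlampos (hη n))) hsl
    calc a < tailf ψ (lam * η n) / tailf ψ (η n) := h2
      _ ≤ tailf ψ (s n) / tailf ψ (η n) := by
          gcongr
          exact (tailf_pos hψ hstrict (hη n)).le
  · intro a ha
    have h1 : ∀ᶠ y in 𝓝 c, y ^ (-ρ) < a ∧ 0 < y :=
      (hcont.eventually (eventually_lt_nhds ha)).and (eventually_gt_nhds hc)
    obtain ⟨ε, hε, hball⟩ := Metric.eventually_nhds_iff.1 h1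
    set lam := c - min (ε/2) (c/2) with hlam
    have hmin : 0 < min (ε/2) (c/2) := lt_min (by linarith) (by linarith)
    have hlc : lam < c := by simp only [hlam]; linarith
    have hlampos : 0 < lam := by
      have : min (ε/2) (c/2) ≤ c/2 := min_le_right _ _
      simp only [hlam]; linarith
    have hdist : dist lam c < ε := by
      rw [Real.dist_eq, hlam, show c - min (ε/2) (c/2) - c = -(min (ε/2) (c/2)) by ring,
        abs_neg, abs_of_pos hmin]
      exact lt_of_le_of_lt (min_le_left _ _) (by linarith)
    have halam : lam ^ (-ρ) < a := (hball hdist).1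
    have hRVl := RVlimit hηtop hRV hlampos
    have hev2 : ∀ᶠ n in atTop, tailf ψ (lam * η n) / tailf ψ (η n) < a :=
      hRVl.eventually (eventually_lt_nhds halam)
    have hev3 : ∀ᶠ n in atTop, lam < s n / η n := hs.eventually (eventually_gt_nhds hlc)
    filter_upwards [hev2, hev3, hspos] with n h2 h3 hsp
    have hsl : lam * η n ≤ s n := by
      rw [lt_div_iff₀ (hη n)] at h3; linarith
    have hmono : tailf ψ (s n) ≤ tailf ψ (lam * η n) :=
      tailf_anti hψ hstrict (mem_Ioi.2 (mul_pos hlampos (hη n))) (mem_Ioi.2 hsp) hsl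
    calc tailf ψ (s n) / tailf ψ (η n) ≤ tailf ψ (lam * η n) / tailf ψ (η n) := by
          gcongr
          exact (tailf_pos hψ hstrict (hη n)).le
      _ < a := h2


lemma part_one (hψ : IsArchimedeanGenerator ψ) (hstrict : ∀ t : ℝ, 0 ≤ t → 0 < ψ t)
    (hη : ∀ n, 0 < η n) (hηtop : Tendsto η atTop atTop)
    (hRV : ∀ lam : ℝ, 0 < lam →
      Tendsto (fun t : ℝ => (1 - ψ (1 / (lam * t))) / (1 - ψ (1 / t))) atTop
        (nhds (lam ^ (-ρ))))
    {r : ℕ → ℝ} (hr : ∀ n, r n = 1 / (1 - ψ (1 / η n)))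
    {kap : ℝ → ℝ} (hkap : Set.BijOn kap (Ioi 0) (Ioi 0))
    (hkapconv : ∀ t : ℝ, 0 < t →
      Tendsto (fun n : ℕ => η (Nat.ceil ((n : ℝ) * t)) / η n) atTop (nhds (kap t)))
    {t : ℝ} (ht : 0 < t) :
    Tendsto (fun n : ℕ => r (Nat.ceil ((n : ℝ) * t)) / r n) atTop (𝓝 (kap t ^ ρ)) := by
  have hkt : 0 < kap t := hkap.mapsTo (mem_Ioi.2 ht)
  have hsand := RVsandwich hψ hstrict hη hηtop hRV hkt (hkapconv t ht)
  have hne : (kap t ^ (-ρ)) ≠ 0 := (Real.rpow_pos_of_pos hkt _).ne'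
  have hinv := hsand.inv₀ hne
  have heq : ∀ n : ℕ, (tailf ψ (η (Nat.ceil ((n : ℝ) * t))) / tailf ψ (η n))⁻¹
      = r (Nat.ceil ((n : ℝ) * t)) / r n := by
    intro n
    have h1 : tailf ψ (η n) ≠ 0 := (tailf_pos hψ hstrict (hη n)).ne'
    have h2 : tailf ψ (η (Nat.ceil ((n : ℝ) * t))) ≠ 0 :=
      (tailf_pos hψ hstrict (hη _)).ne'
    rw [hr, hr]
    show (tailf ψ _ / tailf ψ _)⁻¹ = (1 / tailf ψ _) / (1 / tailf ψ _)
    field_simp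
  have heq2 : (kap t ^ (-ρ))⁻¹ = kap t ^ ρ := by
    rw [Real.rpow_neg hkt.le, inv_inv]
  rw [← heq2]
  exact hinv.congr heq


section PsiInv

variable (hψ : IsArchimedeanGenerator ψ) (hstrict : ∀ t : ℝ, 0 ≤ t → 0 < ψ t)
    (hψinv : ∀ u ∈ Ioc (0:ℝ) 1, 0 ≤ ψinv u ∧ ψ (ψinv u) = u)

include hψ hstrict hψinv

lemma psiinv_one : ψinv 1 = 0 := by
  by_contra h
  have h0 := hψinv 1 (by simp)
  have : ψ (ψinv 1) < ψ 0 :=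
    psi_strictAnti hψ hstrict (mem_Ici.2 le_rfl) (mem_Ici.2 h0.1)
      (lt_of_le_of_ne h0.1 (Ne.symm h))
  rw [h0.2, hψ.2.1] at this
  exact absurd this (lt_irrefl 1)

lemma psiinv_pos {u : ℝ} (hu : u ∈ Ioo (0:ℝ) 1) : 0 < ψinv u := by
  obtain ⟨h1, h2⟩ := hψinv u ⟨hu.1, hu.2.le⟩
  rcases lt_or_eq_of_le h1 with h | h
  · exact h
  · rw [← h, hψ.2.1] at h2; linarith [hu.2, h2]

lemma psiinv_anti : AntitoneOn ψinv (Ioc 0 1) := by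
  intro u hu v hv huv
  obtain ⟨hu1, hu2⟩ := hψinv u hu
  obtain ⟨hv1, hv2⟩ := hψinv v hv
  by_contra h
  push_neg at h
  have : ψ (ψinv v) < ψ (ψinv u) :=
    psi_strictAnti hψ hstrict (mem_Ici.2 hu1) (mem_Ici.2 hv1) h
  rw [hu2, hv2] at this
  exact absurd (lt_of_lt_of_le this huv) (lt_irrefl v)

lemma psiinv_ge {u M : ℝ} (hu : u ∈ Ioc (0:ℝ) 1) (hM : 0 ≤ M) (h : u ≤ ψ M) :
    M ≤ ψinv u := by
  obtain ⟨h1, h2⟩ := hψinv u hu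
  by_contra hcon
  push_neg at hcon
  have : ψ M < ψ (ψinv u) :=
    psi_strictAnti hψ hstrict (mem_Ici.2 h1) (mem_Ici.2 hM) hcon
  rw [h2] at this; linarith

lemma psiinv_le {u M : ℝ} (hu : u ∈ Ioc (0:ℝ) 1) (hM : 0 ≤ M) (h : ψ M ≤ u) :
    ψinv u ≤ M := by
  obtain ⟨h1, h2⟩ := hψinv u hu
  by_contra hcon
  push_neg at hcon
  have : ψ (ψinv u) < ψ M :=
    psi_strictAnti hψ hstrict (mem_Ici.2 hM) (mem_Ici.2 h1) hcon
  rw [h2] at this; linarith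

/-- continuity of ψinv along a converging function -/
lemma tendsto_psiinv_comp {α : Type*} {l : Filter α} {g : α → ℝ}
    (hg1 : ∀ᶠ y in l, g y ∈ Ioc (0:ℝ) 1) {L : ℝ} (hL : L ∈ Ioc (0:ℝ) 1)
    (hgl : Tendsto g l (𝓝 L)) :
    Tendsto (fun y => ψinv (g y)) l (𝓝 (ψinv L)) := by
  apply tendsto_of_psi_tendsto hψ hstrict hψinv
  · filter_upwards [hg1] with y hy
    exact (hψinv _ hy).1
  · exact hL
  · apply hgl.congr'
    filter_upwards [hg1] with y hy
    exact ((hψinv _ hy).2).symm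

end PsiInv

section Phi

/-- the transformation `u ↦ (ψ⁻¹(u))^ρ` with value `∞` at `0`. -/
noncomputable def Phi (ψinv : ℝ → ℝ) (ρ : ℝ) (u : ℝ) : ℝ≥0∞ :=
  if 0 < u then ENNReal.ofReal ((ψinv u) ^ ρ) else ⊤

variable (hψ : IsArchimedeanGenerator ψ) (hstrict : ∀ t : ℝ, 0 ≤ t → 0 < ψ t)
    (hψinv : ∀ u ∈ Ioc (0:ℝ) 1, 0 ≤ ψinv u ∧ ψ (ψinv u) = u)
    (hρ : ρ ∈ Ioc (0:ℝ) 1)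

lemma Phi_eq_top_iff {u : ℝ} : Phi ψinv ρ u = ⊤ ↔ ¬ (0 < u) := by
  simp only [Phi]
  split
  · simp [ENNReal.ofReal_ne_top]; assumption
  · simpa using ‹¬ 0 < u›

include hψ hstrict hψinv hρ

lemma Phi_anti : AntitoneOn (Phi ψinv ρ) (Icc 0 1) := by
  intro u hu v hv huv
  simp only [Phi]
  rcases lt_or_ge 0 u with h | h
  · rw [if_pos h, if_pos (lt_of_lt_of_le h huv)]
    apply ENNReal.ofReal_le_ofReal
    apply Real.rpow_le_rpow (hψinv v ⟨lt_of_lt_of_le h huv, hv.2⟩).1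
      (psiinv_anti hψ hstrict hψinv ⟨h, hu.2⟩ ⟨lt_of_lt_of_le h huv, hv.2⟩ huv) hρ.1.le
  · rw [if_neg (not_lt.2 h)]
    exact le_top

lemma Phi_eq_zero_iff {u : ℝ} (hu : u ∈ Icc (0:ℝ) 1) : Phi ψinv ρ u = 0 ↔ u = 1 := by
  simp only [Phi]
  constructor
  · intro h
    rcases lt_or_ge 0 u with h' | h'
    · rw [if_pos h'] at h
      have h2 := (hψinv u ⟨h', hu.2⟩).1
      have h3 : (ψinv u) ^ ρ ≤ 0 := by
        by_contra hcon
        push_neg at hcon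
        rw [ENNReal.ofReal_eq_zero] at h
        linarith
      have h4 : ψinv u = 0 := by
        by_contra hcon
        have : 0 < ψinv u := lt_of_le_of_ne h2 (Ne.symm hcon)
        have := Real.rpow_pos_of_pos this ρ
        linarith
      have := (hψinv u ⟨h', hu.2⟩).2
      rw [h4, hψ.2.1] at this
      exact this.symm
    · rw [if_neg (not_lt.2 h')] at h
      exact absurd h (by simp)
  · intro h
    subst h
    rw [if_pos one_pos, psiinv_one hψ hstrict hψinv,
      Real.zero_rpow (ne_of_gt hρ.1), ENNReal.ofReal_zero]

/-- continuity of Phi along a converging function -/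
lemma tendsto_Phi_comp {α : Type*} {l : Filter α} {g : α → ℝ}
    (hg1 : ∀ᶠ y in l, g y ∈ Icc (0:ℝ) 1) {L : ℝ} (hL : L ∈ Icc (0:ℝ) 1)
    (hgl : Tendsto g l (𝓝 L)) :
    Tendsto (fun y => Phi ψinv ρ (g y)) l (𝓝 (Phi ψinv ρ L)) := by
  rcases lt_or_ge 0 L with hL0 | hL0
  · have hgpos : ∀ᶠ y in l, g y ∈ Ioc (0:ℝ) 1 := by
      filter_upwards [hg1, hgl.eventually (eventually_gt_nhds hL0)] with y h1 h2
      exact ⟨h2, h1.2⟩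
    have hinv := tendsto_psiinv_comp hψ hstrict hψinv hgpos ⟨hL0, hL.2⟩ hgl
    have hc : ContinuousAt (fun x : ℝ => x ^ ρ) (ψinv L) :=
      Real.continuousAt_rpow_const _ _ (Or.inr hρ.1.le)
    have h2 := (ENNReal.continuous_ofReal.continuousAt.tendsto.comp
      ((hc.tendsto).comp hinv))
    rw [show Phi ψinv ρ L = ENNReal.ofReal ((ψinv L) ^ ρ) from if_pos hL0]
    apply h2.congr'
    filter_upwards [hgpos] with y hy
    simp only [Function.comp, Phi, if_pos hy.1]
  · have hL1 : L = 0 := le_antisymm hL0 hL.1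
    subst hL1
    rw [show Phi ψinv ρ 0 = ⊤ from if_neg (by simp)]
    rw [ENNReal.tendsto_nhds_top_iff_nnreal]
    intro M
    set K : ℝ := (M + 1) ^ (1/ρ) with hK
    have hKnn : 0 ≤ K := Real.rpow_nonneg (by positivity) _
    have hKρ : K ^ ρ = (M:ℝ) + 1 := by
      rw [hK, ← Real.rpow_mul (by positivity), one_div, inv_mul_cancel₀ (ne_of_gt hρ.1),
        Real.rpow_one]
    have hψK : 0 < ψ K := hstrict K hKnn
    filter_upwards [hg1, hgl.eventually (eventually_lt_nhds hψK)] with y h1 h2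
    rcases lt_or_ge 0 (g y) with h3 | h3
    · rw [show Phi ψinv ρ (g y) = ENNReal.ofReal ((ψinv (g y)) ^ ρ) from if_pos h3]
      have h4 : K ≤ ψinv (g y) :=
        psiinv_ge hψ hstrict hψinv ⟨h3, h1.2⟩ hKnn h2.le
      have h5 : (M:ℝ) < (ψinv (g y)) ^ ρ := by
        have := Real.rpow_le_rpow hKnn h4 hρ.1.le
        rw [hKρ] at this
        have hM : (0:ℝ) ≤ M := M.coe_nonneg
        linarith
      calc (M : ℝ≥0∞) = ENNReal.ofReal (M : ℝ) := by
            rw [ENNReal.ofReal_coe_nnreal]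
        _ < ENNReal.ofReal ((ψinv (g y)) ^ ρ) := by
            rw [ENNReal.ofReal_lt_ofReal_iff (lt_of_le_of_lt M.coe_nonneg h5)]
            exact h5
    · rw [show Phi ψinv ρ (g y) = ⊤ from if_neg (not_lt.2 h3)]
      exact ENNReal.coe_lt_top

end Phi

section ConvT

variable (hψ : IsArchimedeanGenerator ψ) (hstrict : ∀ t : ℝ, 0 ≤ t → 0 < ψ t)
    (hψinv : ∀ u ∈ Ioc (0:ℝ) 1, 0 ≤ ψinv u ∧ ψ (ψinv u) = u)
    (hη : ∀ n, 0 < η n) (hηtop : Tendsto η atTop atTop)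
    (hρ : ρ ∈ Ioc (0:ℝ) 1)
    (hRV : ∀ lam : ℝ, 0 < lam →
      Tendsto (fun t : ℝ => (1 - ψ (1 / (lam * t))) / (1 - ψ (1 / t))) atTop
        (nhds (lam ^ (-ρ))))

include hψ hstrict hψinv hη hηtop hρ hRV

lemma conv_T {r : ℕ → ℝ} (hr : ∀ n, r n = 1 / (1 - ψ (1 / η n)))
    {δ : ℕ → ℝ → ℝ}
    (hδ : ∀ n, δ n 0 = 0 ∧ ∀ u ∈ Ioc (0:ℝ) 1, δ n u = ψ (η n * ψinv u))
    {u : ℕ → ℝ} (hu : ∀ n, u n ∈ Icc (0:ℝ) 1)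
    {L : ℝ} (hL : L ∈ Icc (0:ℝ) 1)
    (hconv : Tendsto (fun n => δ n (u n)) atTop (𝓝 L)) :
    Tendsto (fun n => ENNReal.ofReal (r n * (1 - u n))) atTop (𝓝 (Phi ψinv ρ L)) := by
  have hrn : ∀ n, r n * (1 - u n) = (1 - u n) / tailf ψ (η n) := by
    intro n
    rw [hr n]
    show 1 / tailf ψ (η n) * (1 - u n) = _
    rw [one_div, inv_mul_eq_div]
  have h1u : ∀ n, 0 ≤ 1 - u n := fun n => by linarith [(hu n).2]
  -- eventual identification of δ with ψ-form when L > 0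
  have hevpos : 0 < L → ∀ᶠ n in atTop, u n ∈ Ioc (0:ℝ) 1 := by
    intro hL0
    filter_upwards [hconv.eventually (eventually_gt_nhds hL0)] with n hn
    rcases ((hu n).1).lt_or_eq with h | h
    · exact ⟨h, (hu n).2⟩
    · exfalso
      rw [← h, (hδ n).1] at hn
      exact lt_irrefl 0 hn
  rcases eq_or_lt_of_le hL.1 with hL0 | hL0
  · -- case L = 0 : limit is ⊤
    rw [show Phi ψinv ρ L = ⊤ from if_neg (by rw [← hL0]; simp)]
    apply Tendsto.comp ENNReal.tendsto_ofReal_atTop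
    rw [tendsto_atTop]
    intro M
    set Q : ℝ := max (M + 1) 1 with hQ
    have hQpos : 0 < Q := lt_of_lt_of_le one_pos (le_max_right _ _)
    set m : ℝ := Q ^ (-(1/ρ)) with hm
    have hmpos : 0 < m := Real.rpow_pos_of_pos hQpos _
    have hmρ : m ^ (-ρ) = Q := by
      rw [hm, ← Real.rpow_mul hQpos.le]
      rw [show -(1/ρ) * -ρ = ρ/ρ by ring, div_self (ne_of_gt hρ.1), Real.rpow_one]
    have hMQ : M < Q := lt_of_lt_of_le (by linarith) (le_max_left _ _)
    have hlim := RVlimit hηtop hRV hmpos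
    have hev1 : ∀ᶠ n in atTop, M < tailf ψ (m * η n) / tailf ψ (η n) := by
      apply hlim.eventually (eventually_gt_nhds _)
      rw [hmρ]; exact hMQ
    have hψm : 0 < ψ (1/m) := hstrict _ (one_div_pos.2 hmpos).le
    have hev2 : ∀ᶠ n in atTop, δ n (u n) < ψ (1/m) := by
      apply hconv.eventually (eventually_lt_nhds _)
      rw [← hL0]; exact hψm
    filter_upwards [hev1, hev2] with n h1 h2
    have hkey : tailf ψ (m * η n) ≤ 1 - u n := by
      rcases ((hu n).1).lt_or_eq with h3 | h3
      · -- u n > 0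
        have hun : u n ∈ Ioc (0:ℝ) 1 := ⟨h3, (hu n).2⟩
        have hδn : δ n (u n) = ψ (η n * ψinv (u n)) := (hδ n).2 _ hun
        rw [hδn] at h2
        have hw0 : 0 ≤ η n * ψinv (u n) :=
          mul_nonneg (hη n).le (hψinv _ hun).1
        have hmη : 0 < m * η n := mul_pos hmpos (hη n)
        have hwge : 1/m ≤ η n * ψinv (u n) := by
          by_contra hcon
          push_neg at hcon
          have : ψ (1/m) ≤ ψ (η n * ψinv (u n)) :=
            psi_anti hψ hstrict (mem_Ici.2 hw0) (mem_Ici.2 (one_div_pos.2 hmpos).le) hcon.le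
          linarith
        have hinvge : 1/(m * η n) ≤ ψinv (u n) := by
          rw [div_le_iff₀ hmη]
          calc 1 ≤ η n * ψinv (u n) * m := by rwa [div_le_iff₀ hmpos] at hwge
            _ = ψinv (u n) * (m * η n) := by ring
        have : ψ (ψinv (u n)) ≤ ψ (1/(m * η n)) :=
          psi_anti hψ hstrict (mem_Ici.2 (one_div_pos.2 hmη).le)
            (mem_Ici.2 (hψinv _ hun).1) hinvge
        rw [(hψinv _ hun).2] at this
        simp only [tailf]
        linarith
      · rw [← h3]
        simp only [tailf, sub_zero]
        linarith [(hψ.2.2.1 (1/(m * η n))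
          (mem_Ici.2 (one_div_pos.2 (mul_pos hmpos (hη n))).le)).1]
    rw [hrn]
    calc M ≤ tailf ψ (m * η n) / tailf ψ (η n) := h1.le
      _ ≤ (1 - u n) / tailf ψ (η n) := by
          gcongr
          exact (tailf_pos hψ hstrict (hη n)).le
  · -- L > 0 : identify δ with ψ-form eventually
    have hev := hevpos hL0
    have hevδ : ∀ᶠ n in atTop, δ n (u n) = ψ (η n * ψinv (u n)) := by
      filter_upwards [hev] with n hn
      exact (hδ n).2 _ hn
    have hψw : Tendsto (fun n => ψ (η n * ψinv (u n))) atTop (𝓝 L) :=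
      hconv.congr' hevδ
    have hwnn : ∀ᶠ n in atTop, 0 ≤ η n * ψinv (u n) := by
      filter_upwards [hev] with n hn
      exact mul_nonneg (hη n).le (hψinv _ hn).1
    rcases eq_or_lt_of_le hL.2 with hL1 | hL1
    · -- case L = 1 : limit is 0
      rw [show Phi ψinv ρ L = 0 from by
        rw [hL1]; exact (Phi_eq_zero_iff hψ hstrict hψinv hρ (by simp)).2 rfl]
      have hw0 : Tendsto (fun n => η n * ψinv (u n)) atTop (𝓝 0) := by
        have := tendsto_of_psi_tendsto hψ hstrict hψinv hwnn (by rw [hL1]; simp) hψw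
        rwa [hL1, psiinv_one hψ hstrict hψinv] at this
      have : Tendsto (fun n => r n * (1 - u n)) atTop (𝓝 0) := by
        rw [tendsto_order]
        constructor
        · intro a ha
          filter_upwards with n
          have : 0 ≤ r n * (1 - u n) := by
            rw [hrn]
            exact div_nonneg (h1u n) (tailf_pos hψ hstrict (hη n)).le
          linarith
        · intro a ha
          obtain ⟨M, hM1, hM2⟩ :
              ∃ M : ℝ, M ^ (-ρ) < a ∧ 0 < M := by
            have := (tendsto_rpow_neg_atTop hρ.1).eventually (eventually_lt_nhds ha)
            obtain ⟨M, hM⟩ := (this.and (eventually_gt_atTop 0)).exists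
            exact ⟨M, hM.1, hM.2⟩
          have hlim := RVlimit hηtop hRV hM2
          have hev1 : ∀ᶠ n in atTop, tailf ψ (M * η n) / tailf ψ (η n) < a :=
            hlim.eventually (eventually_lt_nhds hM1)
          have hev2 : ∀ᶠ n in atTop, η n * ψinv (u n) < 1/M :=
            hw0.eventually (eventually_lt_nhds (by positivity))
          filter_upwards [hev1, hev2, hev] with n h1 h2 h3
          have hMη : 0 < M * η n := mul_pos hM2 (hη n)
          have hinvle : ψinv (u n) ≤ 1/(M * η n) := by
            rw [lt_div_iff₀ hM2] at h2
            rw [le_div_iff₀ hMη]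
            calc ψinv (u n) * (M * η n) = η n * ψinv (u n) * M := by ring
              _ ≤ 1 := h2.le
          have hkey : ψ (1/(M * η n)) ≤ ψ (ψinv (u n)) :=
            psi_anti hψ hstrict (mem_Ici.2 (hψinv _ h3).1)
              (mem_Ici.2 (one_div_pos.2 hMη).le) hinvle
          rw [(hψinv _ h3).2] at hkey
          rw [hrn]
          calc (1 - u n) / tailf ψ (η n) ≤ tailf ψ (M * η n) / tailf ψ (η n) := by
                gcongr
                · exact (tailf_pos hψ hstrict (hη n)).le
                · simp only [tailf]; linarith
            _ < a := h1
      have h2 := (ENNReal.continuous_ofReal.continuousAt (x := (0:ℝ))).tendsto.comp this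
      simpa [Function.comp_def] using h2
    · -- case 0 < L < 1
      rw [show Phi ψinv ρ L = ENNReal.ofReal ((ψinv L) ^ ρ) from if_pos hL0]
      set w := ψinv L with hwdef
      have hwpos : 0 < w := psiinv_pos hψ hstrict hψinv ⟨hL0, hL1⟩
      have hwconv : Tendsto (fun n => η n * ψinv (u n)) atTop (𝓝 w) :=
        tendsto_of_psi_tendsto hψ hstrict hψinv hwnn ⟨hL0, hL.2⟩ hψw
      have hevw : ∀ᶠ n in atTop, 0 < η n * ψinv (u n) :=
        hwconv.eventually (eventually_gt_nhds hwpos)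
      have hψnpos : ∀ᶠ n in atTop, 0 < ψinv (u n) := by
        filter_upwards [hevw, hev] with n hn hun
        rcases ((hψinv _ hun).1).lt_or_eq with h | h
        · exact h
        · exfalso; rw [← h, mul_zero] at hn; exact lt_irrefl 0 hn
      have hsconv : Tendsto (fun n => (1 / ψinv (u n)) / η n) atTop (𝓝 w⁻¹) := by
        have hinv : Tendsto (fun n => (η n * ψinv (u n))⁻¹) atTop (𝓝 w⁻¹) :=
          hwconv.inv₀ hwpos.ne'
        apply hinv.congr'
        filter_upwards [hψnpos] with n hn
        have hηn := (hη n).ne'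
        field_simp
      have hsand := RVsandwich hψ hstrict hη hηtop hRV (inv_pos.2 hwpos) hsconv
      have hval : (w⁻¹ : ℝ) ^ (-ρ) = w ^ ρ := by
        rw [Real.rpow_neg (inv_nonneg.2 hwpos.le), Real.inv_rpow hwpos.le, inv_inv]
      have hfinal : Tendsto (fun n => r n * (1 - u n)) atTop (𝓝 (w ^ ρ)) := by
        rw [← hval]
        apply hsand.congr'
        filter_upwards [hψnpos, hev] with n hn hun
        rw [hrn n]
        congr 1
        simp only [tailf, one_div_one_div]
        rw [(hψinv _ hun).2]
      exact ENNReal.tendsto_ofReal hfinal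

end ConvT

section Density

/-- a co-countable set meets every interval -/
lemma cocountable_dense {D : Set ℝ} (hD : Dᶜ.Countable) {x y : ℝ} (hxy : x < y) :
    (D ∩ Ioo x y).Nonempty := by
  by_contra h
  rw [not_nonempty_iff_eq_empty] at h
  have hsub : Ioo x y ⊆ Dᶜ := by
    intro z hz
    by_contra hz'
    rw [notMem_compl_iff] at hz'
    exact absurd (mem_inter hz' hz) (by rw [h]; exact notMem_empty z)
  have h1 : MeasureTheory.volume (Ioo x y) ≤ MeasureTheory.volume Dᶜ :=
    MeasureTheory.measure_mono hsub
  rw [hD.measure_zero, Real.volume_Ioo] at h1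
  simp only [nonpos_iff_eq_zero, ENNReal.ofReal_eq_zero] at h1
  linarith

lemma nebot_right {D : Set ℝ} (hD : Dᶜ.Countable) (x : ℝ) :
    (𝓝[>] x ⊓ 𝓟 D).NeBot := by
  rw [((nhdsGT_basis x).inf_principal D).neBot_iff]
  intro i hi
  obtain ⟨z, hz⟩ := cocountable_dense hD hi
  exact ⟨z, hz.2, hz.1⟩

lemma nebot_left {D : Set ℝ} (hD : Dᶜ.Countable) (x : ℝ) :
    (𝓝[<] x ⊓ 𝓟 D).NeBot := by
  rw [((nhdsLT_basis x).inf_principal D).neBot_iff]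
  intro i hi
  obtain ⟨z, hz⟩ := cocountable_dense hD hi
  exact ⟨z, hz.2, hz.1⟩

lemma cocountable_unbounded_above {D : Set ℝ} (hD : Dᶜ.Countable) (w : ℝ) :
    ∃ z ∈ D, w < z := by
  obtain ⟨z, hz⟩ := cocountable_dense hD (show w < w + 1 by linarith)
  exact ⟨z, hz.1, hz.2.1⟩

lemma cocountable_unbounded_below {D : Set ℝ} (hD : Dᶜ.Countable) (w : ℝ) :
    ∃ z ∈ D, z < w := by
  obtain ⟨z, hz⟩ := cocountable_dense hD (show w - 1 < w by linarith)
  exact ⟨z, hz.1, hz.2.2⟩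

end Density

section Vprop

variable (hψ : IsArchimedeanGenerator ψ) (hstrict : ∀ t : ℝ, 0 ≤ t → 0 < ψ t)
    (hψinv : ∀ u ∈ Ioc (0:ℝ) 1, 0 ≤ ψinv u ∧ ψ (ψinv u) = u)
    (hρ : ρ ∈ Ioc (0:ℝ) 1) {G : ℝ → ℝ} (hG : IsDistFun G)

include hψ hstrict hψinv hρ hG

lemma V_anti : Antitone (fun x => Phi ψinv ρ (G x)) := by
  intro x y hxy
  exact Phi_anti hψ hstrict hψinv hρ (hG.2.2.2.2 x) (hG.2.2.2.2 y) (hG.1 hxy)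

lemma V_rightCont (x : ℝ) :
    ContinuousWithinAt (fun x => Phi ψinv ρ (G x)) (Ici x) x :=
  tendsto_Phi_comp hψ hstrict hψinv hρ (Eventually.of_forall fun y => hG.2.2.2.2 y)
    (hG.2.2.2.2 x) (hG.2.1 x)

lemma V_contAt {x : ℝ} (hx : ContinuousAt G x) :
    ContinuousAt (fun x => Phi ψinv ρ (G x)) x :=
  tendsto_Phi_comp hψ hstrict hψinv hρ (Eventually.of_forall fun y => hG.2.2.2.2 y)
    (hG.2.2.2.2 x) hx

lemma V_atBot : Tendsto (fun x => Phi ψinv ρ (G x)) atBot (𝓝 ⊤) := by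
  have := tendsto_Phi_comp hψ hstrict hψinv hρ
    (Eventually.of_forall fun y => hG.2.2.2.2 y) (left_mem_Icc.2 zero_le_one) hG.2.2.1
  rwa [show Phi ψinv ρ 0 = ⊤ from if_neg (by simp)] at this

lemma V_atTop : Tendsto (fun x => Phi ψinv ρ (G x)) atTop (𝓝 0) := by
  have := tendsto_Phi_comp hψ hstrict hψinv hρ
    (Eventually.of_forall fun y => hG.2.2.2.2 y) (right_mem_Icc.2 zero_le_one) hG.2.2.2.1
  rwa [(Phi_eq_zero_iff hψ hstrict hψinv hρ (right_mem_Icc.2 zero_le_one)).2 rfl] at this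

end Vprop

section TwoPoints

variable {G : ℝ → ℝ}

lemma G_cont_cocountable (hG : IsDistFun G) : {x | ContinuousAt G x}ᶜ.Countable := by
  have := hG.1.countable_not_continuousAt
  convert this using 1
  rfl

/-- a nondegenerate df has a continuity point with interior value -/
lemma exists_interior_cont_point (hG : IsDistFun G) (hnd : ¬ IsDegenerateDF G) :
    ∃ x, ContinuousAt G x ∧ G x ∈ Ioo (0:ℝ) 1 := by
  by_contra hcon
  push_neg at hcon
  set D := {x | ContinuousAt G x} with hD
  have hDc : Dᶜ.Countable := G_cont_cocountable hG
  have hval : ∀ x ∈ D, G x = 0 ∨ G x = 1 := by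
    intro x hx
    have h1 := hcon x hx
    have h2 := hG.2.2.2.2 x
    rw [mem_Ioo, not_and_or] at h1
    rcases h1 with h | h
    · left; push_neg at h; linarith [h2.1]
    · right; push_neg at h; linarith [h2.2]
  -- find a continuity point with value 1
  obtain ⟨y0, hy0⟩ := (hG.2.2.2.1.eventually (eventually_gt_nhds (show (1:ℝ)/2 < 1 by norm_num))).exists_forall_of_atTop
  obtain ⟨z0, hz0D, hz0⟩ := cocountable_unbounded_above hDc y0
  have hz0val : G z0 = 1 := by
    rcases hval z0 hz0D with h | h
    · exfalso; have := hy0 z0 hz0.le; rw [h] at this; linarith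
    · exact h
  -- find a point with value 0
  obtain ⟨y1, hy1⟩ := (hG.2.2.1.eventually (eventually_lt_nhds (show (0:ℝ) < 1/2 by norm_num))).exists_forall_of_atBot
  obtain ⟨q, hqD, hq⟩ := cocountable_unbounded_below hDc y1
  have hqval : G q = 0 := by
    rcases hval q hqD with h | h
    · exact h
    · exfalso; have := hy1 q hq.le; rw [h] at this; linarith
  -- the set of points below level 1
  set Sset := {x | G x < 1} with hSset
  have hSne : Sset.Nonempty := ⟨q, by simp [hSset, hqval]⟩
  have hSbdd : BddAbove Sset := by
    refine ⟨z0, fun x hx => ?_⟩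
    by_contra hxz
    push_neg at hxz
    have : G z0 ≤ G x := hG.1 hxz.le
    rw [hz0val] at this
    exact absurd (lt_of_le_of_lt this hx) (lt_irrefl 1)
  set a := sSup Sset with ha
  apply hnd
  refine ⟨a, fun x => ?_⟩
  rcases lt_or_ge x a with hx | hx
  · rw [if_neg (not_le.2 hx)]
    obtain ⟨y, hyS, hxy⟩ := exists_lt_of_lt_csSup hSne hx
    obtain ⟨z, hzD, hz⟩ := cocountable_dense hDc hxy
    have hGz : G z < 1 := lt_of_le_of_lt (hG.1 hz.2.le) hyS
    have hGz0 : G z = 0 := by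
      rcases hval z hzD with h | h
      · exact h
      · exfalso; rw [h] at hGz; exact lt_irrefl 1 hGz
    have := hG.1 hz.1.le
    rw [hGz0] at this
    linarith [(hG.2.2.2.2 x).1]
  · rw [if_pos hx]
    have hgt : ∀ y, a < y → G y = 1 := by
      intro y hy
      by_contra hcon2
      have : G y < 1 := lt_of_le_of_ne (hG.2.2.2.2 y).2 hcon2
      have : y ∈ Sset := this
      have := le_csSup hSbdd this
      linarith
    have h1 : Tendsto G (𝓝[>] a) (𝓝 (G a)) :=
      (hG.2.1 a).mono_left (nhdsWithin_mono a Ioi_subset_Ici_self)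
    have h2 : Tendsto G (𝓝[>] a) (𝓝 1) := by
      apply Tendsto.congr' _ tendsto_const_nhds
      filter_upwards [self_mem_nhdsWithin] with y hy
      exact (hgt y hy).symm
    have hGa : G a = 1 := tendsto_nhds_unique h1 h2
    have hax : G a ≤ G x := hG.1 hx
    have := (hG.2.2.2.2 x).2
    linarith
  
lemma exists_two_cont_points (hG : IsDistFun G) (hnd : ¬ IsDegenerateDF G) :
    ∃ x0 x1 : ℝ, x0 < x1 ∧ ContinuousAt G x0 ∧ ContinuousAt G x1 ∧
      G x0 ∈ Ioo (0:ℝ) 1 ∧ G x1 ∈ Ioo (0:ℝ) 1 := by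
  obtain ⟨x0, hx0c, hx0v⟩ := exists_interior_cont_point hG hnd
  have hDc : {x | ContinuousAt G x}ᶜ.Countable := G_cont_cocountable hG
  by_contra hcon
  push_neg at hcon
  -- every other continuity point has value 0 or 1
  have hval : ∀ z, ContinuousAt G z → z ≠ x0 → G z = 0 ∨ G z = 1 := by
    intro z hz hne
    by_contra h2
    push_neg at h2
    have hz01 : G z ∈ Ioo (0:ℝ) 1 := by
      have := hG.2.2.2.2 z
      constructor
      · exact lt_of_le_of_ne this.1 (Ne.symm h2.1)
      · exact lt_of_le_of_ne this.2 h2.2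
    rcases lt_trichotomy z x0 with h | h | h
    · exact absurd hz01 (fun hmm => by
        have := hcon z x0 h hz hx0c hmm
        exact absurd hx0v this)
    · exact hne h
    · exact absurd hz01 (fun hmm => by
        have := hcon x0 z h hx0c hz hx0v
        exact absurd hmm this)
  -- continuity points above x0 have value 1
  have hup : ∀ z, ContinuousAt G z → x0 < z → G z = 1 := by
    intro z hz hx0z
    rcases hval z hz (ne_of_gt hx0z) with h | h
    · exfalso
      have : G x0 ≤ G z := hG.1 hx0z.le
      rw [h] at this
      linarith [hx0v.1]
    · exact h
  -- right continuity at x0 along continuity points gives G x0 = 1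
  have hne : (𝓝[>] x0 ⊓ 𝓟 {x | ContinuousAt G x}).NeBot := nebot_right hDc x0
  have h1 : Tendsto G (𝓝[>] x0 ⊓ 𝓟 {x | ContinuousAt G x}) (𝓝 (G x0)) := by
    apply ((hG.2.1 x0).mono_left (nhdsWithin_mono x0 Ioi_subset_Ici_self)).mono_left
      inf_le_left
  have h2 : Tendsto G (𝓝[>] x0 ⊓ 𝓟 {x | ContinuousAt G x}) (𝓝 1) := by
    apply Tendsto.congr' _ tendsto_const_nhds
    rw [EventuallyEq, eventually_inf_principal]
    filter_upwards [self_mem_nhdsWithin] with y hy hyD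
    exact (hup y hyD hy).symm
  have : G x0 = 1 := tendsto_nhds_unique h1 h2
  rw [this] at hx0v
  exact lt_irrefl 1 hx0v.2

end TwoPoints

section Types

set_option maxHeartbeats 2000000 in
lemma types_lemma
    {g : ℕ → ℝ → ℝ≥0∞} (hganti : ∀ n, Antitone (g n))
    {V : ℝ → ℝ≥0∞} {D : Set ℝ} (hD : Dᶜ.Countable)
    (hconv : ∀ x ∈ D, Tendsto (fun n => g n x) atTop (𝓝 (V x)))
    {a b : ℕ → ℝ} (hapos : ∀ n, 0 < a n)
    {S : ℝ≥0∞} (hS0 : S ≠ 0) (hStop : S ≠ ⊤)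
    (hconv2 : ∀ x ∈ D, Tendsto (fun n => g n (a n * x + b n)) atTop (𝓝 (V x / S)))
    (hVbot : Tendsto V atBot (𝓝 ⊤)) (hVtop : Tendsto V atTop (𝓝 0))
    (hVcont : ∀ x ∈ D, ContinuousAt V x)
    {x0 x1 : ℝ} (hx01 : x0 < x1) (hx0D : x0 ∈ D) (hx1D : x1 ∈ D)
    (hV00 : V x0 ≠ 0) (hV0t : V x0 ≠ ⊤) (hV10 : V x1 ≠ 0) (hV1t : V x1 ≠ ⊤) :
    ∃ A B : ℝ, 0 < A ∧ ∀ x ∈ D, A * x + B ∈ D → V (A * x + B) = V x / S := by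
  classical
  set L0 := V x0 / S with hL0def
  set L1 := V x1 / S with hL1def
  have hdivne : ∀ v : ℝ≥0∞, v ≠ 0 → v / S ≠ 0 := fun v hv h => by
    rcases ENNReal.div_eq_zero_iff.1 h with h1 | h1
    exacts [hv h1, hStop h1]
  have hdivnt : ∀ v : ℝ≥0∞, v ≠ ⊤ → v / S ≠ ⊤ := fun v hv h => by
    rcases ENNReal.div_eq_top.1 h with ⟨_, h2⟩ | ⟨h1, _⟩
    exacts [hS0 h2, hv h1]
  have hL00 : L0 ≠ 0 := hdivne _ hV00
  have hL0t : L0 ≠ ⊤ := hdivnt _ hV0t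
  have hL10 : L1 ≠ 0 := hdivne _ hV10
  have hL1t : L1 ≠ ⊤ := hdivnt _ hV1t
  set L := max L0 L1 with hLdef
  have hLne : L ≠ 0 := fun h => hL00 (le_antisymm (h ▸ le_max_left _ _) zero_le)
  have hLt : L ≠ ⊤ := (max_lt (lt_top_iff_ne_top.2 hL0t) (lt_top_iff_ne_top.2 hL1t)).ne
  set m := min L0 L1 with hmdef
  have hmne : m ≠ 0 := by
    intro h
    rcases min_eq_iff.1 h with ⟨h1, _⟩ | ⟨h1, _⟩
    exacts [hL00 h1, hL10 h1]
  have hmt : m ≠ ⊤ := ((min_le_left _ _).trans_lt (lt_top_iff_ne_top.2 hL0t)).ne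
  have hL2 : L < 2 * L := by
    rw [two_mul]
    exact ENNReal.lt_add_right hLt hLne
  have hm2 : m / 2 < m := ENNReal.half_lt_self hmne hmt
  have h2Lt : 2 * L < ⊤ := lt_top_iff_ne_top.2 (ENNReal.mul_ne_top (by norm_num) hLt)
  -- choose bracketing points
  obtain ⟨w1, hw1⟩ := eventually_atBot.1 (hVbot.eventually (eventually_gt_nhds h2Lt))
  obtain ⟨ym, hymD, hym⟩ := cocountable_unbounded_below hD w1
  have hVym : 2 * L < V ym := hw1 ym hym.le
  have hm2pos : (0:ℝ≥0∞) < m / 2 := by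
    rw [pos_iff_ne_zero, Ne, ENNReal.div_eq_zero_iff]
    push_neg
    exact ⟨hmne, by norm_num⟩
  obtain ⟨w2, hw2⟩ := eventually_atTop.1 (hVtop.eventually (eventually_lt_nhds hm2pos))
  obtain ⟨yp, hypD, hyp⟩ := cocountable_unbounded_above hD w2
  have hVyp : V yp < m / 2 := hw2 yp hyp.le
  -- bracketing of the affine images
  have bracket : ∀ x ∈ D, V x / S ≤ L → m ≤ V x / S →
      ∀ᶠ n in atTop, a n * x + b n ∈ Icc ym yp := by
    intro x hxD hxle hxge
    have hx2 := hconv2 x hxD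
    have hev1 : ∀ᶠ n in atTop, g n (a n * x + b n) < 2 * L :=
      hx2.eventually (eventually_lt_nhds (lt_of_le_of_lt hxle hL2))
    have hev2 : ∀ᶠ n in atTop, m / 2 < g n (a n * x + b n) :=
      hx2.eventually (eventually_gt_nhds (lt_of_lt_of_le hm2 hxge))
    have hev3 : ∀ᶠ n in atTop, 2 * L < g n ym :=
      (hconv ym hymD).eventually (eventually_gt_nhds hVym)
    have hev4 : ∀ᶠ n in atTop, g n yp < m / 2 :=
      (hconv yp hypD).eventually (eventually_lt_nhds hVyp)
    filter_upwards [hev1, hev2, hev3, hev4] with n h1 h2 h3 h4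
    constructor
    · by_contra hcon
      push_neg at hcon
      exact absurd h1 (not_lt.2 (lt_of_lt_of_le h3 (hganti n hcon.le)).le)
    · by_contra hcon
      push_neg at hcon
      exact absurd h2 (not_lt.2 (lt_of_le_of_lt (hganti n hcon.le) h4).le)
  have hbr0 := bracket x0 hx0D (le_max_left _ _) (min_le_left _ _)
  have hbr1 := bracket x1 hx1D (le_max_right _ _) (min_le_right _ _)
  -- deduce boundedness of (a n, b n)
  set C1 : ℝ := (yp - ym) / (x1 - x0) with hC1
  set C2 : ℝ := |ym| ⊔ |yp| + C1 * |x0| with hC2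
  have hbound : ∀ᶠ n in atTop, (a n, b n) ∈ Icc (0:ℝ) C1 ×ˢ Icc (-C2) C2 := by
    filter_upwards [hbr0, hbr1] with n h0 h1
    have hb1 : ym ≤ a n * x0 + b n := h0.1
    have hb2 : a n * x0 + b n ≤ yp := h0.2
    have hc1 : ym ≤ a n * x1 + b n := h1.1
    have hc2 : a n * x1 + b n ≤ yp := h1.2
    have haC1 : a n ≤ C1 := by
      rw [hC1, le_div_iff₀ (sub_pos.2 hx01)]
      nlinarith
    have h5 : a n * x0 ≤ a n * |x0| :=
      mul_le_mul_of_nonneg_left (le_abs_self x0) (hapos n).le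
    have h6 : -(a n * |x0|) ≤ a n * x0 := by
      have := mul_le_mul_of_nonneg_left (neg_abs_le x0) (hapos n).le
      linarith [this]
    have h7 : a n * |x0| ≤ C1 * |x0| :=
      mul_le_mul_of_nonneg_right haC1 (abs_nonneg x0)
    have h8 : ym ≥ -(|ym| ⊔ |yp|) := by
      have : |ym| ≤ |ym| ⊔ |yp| := le_max_left _ _
      have := neg_abs_le ym
      linarith
    have h9 : yp ≤ |ym| ⊔ |yp| := le_trans (le_abs_self yp) (le_max_right _ _)
    exact ⟨⟨(hapos n).le, haC1⟩, Set.mem_Icc.2 ⟨by linarith, by linarith⟩⟩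
  -- extract a convergent subsequence
  obtain ⟨N0, hN0⟩ := eventually_atTop.1 hbound
  have hbounded : Bornology.IsBounded (Icc (0:ℝ) C1 ×ˢ Icc (-C2) C2) :=
    (Metric.isBounded_Icc _ _).prod (Metric.isBounded_Icc _ _)
  obtain ⟨p, _, φ, hφ, hφconv⟩ := tendsto_subseq_of_bounded hbounded
    (x := fun k => (a (k + N0), b (k + N0))) (fun k => hN0 (k + N0) (Nat.le_add_left _ _))
  set A := p.1 with hAdef
  set B := p.2 with hBdef
  have hsub : Tendsto (fun k => φ k + N0) atTop atTop :=
    (tendsto_add_atTop_nat N0).comp hφ.tendsto_atTop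
  have hA : Tendsto (fun k => a (φ k + N0)) atTop (𝓝 A) :=
    (continuous_fst.tendsto p).comp hφconv
  have hB : Tendsto (fun k => b (φ k + N0)) atTop (𝓝 B) :=
    (continuous_snd.tendsto p).comp hφconv
  have hA0 : 0 ≤ A := ge_of_tendsto' hA fun k => (hapos _).le
  have hargx : ∀ x : ℝ, Tendsto (fun k => a (φ k + N0) * x + b (φ k + N0)) atTop
      (𝓝 (A * x + B)) := fun x => (hA.mul_const x).add hB
  have hgsub : ∀ x ∈ D, Tendsto (fun k => g (φ k + N0) x) atTop (𝓝 (V x)) :=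
    fun x hx => (hconv x hx).comp hsub
  have hgasub : ∀ x ∈ D,
      Tendsto (fun k => g (φ k + N0) (a (φ k + N0) * x + b (φ k + N0))) atTop
        (𝓝 (V x / S)) := fun x hx => (hconv2 x hx).comp hsub
  -- rule out A = 0
  have hAne : A ≠ 0 := by
    intro hA0eq
    have hargB : ∀ x : ℝ, Tendsto (fun k => a (φ k + N0) * x + b (φ k + N0)) atTop (𝓝 B) := by
      intro x
      have := hargx x
      rwa [hA0eq, zero_mul, zero_add] at this
    have hzero : ∀ z ∈ D, B < z → V z = 0 := by
      intro z hzD hBz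
      have hVzle : ∀ x ∈ D, V z ≤ V x / S := by
        intro x hxD
        have hev : ∀ᶠ k in atTop, a (φ k + N0) * x + b (φ k + N0) ≤ z :=
          ((hargB x).eventually (eventually_lt_nhds hBz)).mono fun k hk => hk.le
        apply le_of_tendsto_of_tendsto (hgsub z hzD) (hgasub x hxD)
        filter_upwards [hev] with k hk
        exact hganti _ hk
      by_contra hVz0
      have hVzS : (0:ℝ≥0∞) < V z * S := by
        rw [pos_iff_ne_zero]
        simp only [Ne, mul_eq_zero, not_or]
        exact ⟨hVz0, hS0⟩
      obtain ⟨w3, hw3⟩ := eventually_atTop.1 (hVtop.eventually (eventually_lt_nhds hVzS))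
      obtain ⟨x, hxD, hx⟩ := cocountable_unbounded_above hD w3
      have h1 : V x / S < V z := by
        rw [ENNReal.div_lt_iff (Or.inl hS0) (Or.inl hStop)]
        exact hw3 x hx.le
      exact absurd (lt_of_le_of_lt (hVzle x hxD) h1) (lt_irrefl _)
    have htop : ∀ z ∈ D, z < B → V z = ⊤ := by
      intro z hzD hzB
      have hVzge : ∀ x ∈ D, V x / S ≤ V z := by
        intro x hxD
        have hev : ∀ᶠ k in atTop, z ≤ a (φ k + N0) * x + b (φ k + N0) :=
          ((hargB x).eventually (eventually_gt_nhds hzB)).mono fun k hk => hk.le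
        apply le_of_tendsto_of_tendsto (hgasub x hxD) (hgsub z hzD)
        filter_upwards [hev] with k hk
        exact hganti _ hk
      by_contra hVzt
      have hVzS : V z * S < ⊤ := lt_top_iff_ne_top.2 (ENNReal.mul_ne_top hVzt hStop)
      obtain ⟨w3, hw3⟩ := eventually_atBot.1 (hVbot.eventually (eventually_gt_nhds hVzS))
      obtain ⟨x, hxD, hx⟩ := cocountable_unbounded_below hD w3
      have h1 : V z < V x / S := by
        rw [ENNReal.lt_div_iff_mul_lt (Or.inl hS0) (Or.inl hStop)]
        exact hw3 x hx.le
      exact absurd (lt_of_lt_of_le h1 (hVzge x hxD)) (lt_irrefl _)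
    rcases lt_or_ge B x1 with h | h
    · exact hV10 (hzero x1 hx1D h)
    · exact hV0t (htop x0 hx0D (lt_of_lt_of_le hx01 h))
  have hApos : 0 < A := lt_of_le_of_ne hA0 (Ne.symm hAne)
  refine ⟨A, B, hApos, ?_⟩
  intro x hxD hpD
  set pnt := A * x + B with hpnt
  have harg := hargx x
  have hup : ∀ z ∈ D, pnt < z → V z ≤ V x / S := by
    intro z hzD hz
    have hev : ∀ᶠ k in atTop, a (φ k + N0) * x + b (φ k + N0) ≤ z :=
      (harg.eventually (eventually_lt_nhds hz)).mono fun k hk => hk.le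
    apply le_of_tendsto_of_tendsto (hgsub z hzD) (hgasub x hxD)
    filter_upwards [hev] with k hk
    exact hganti _ hk
  have hdown : ∀ z ∈ D, z < pnt → V x / S ≤ V z := by
    intro z hzD hz
    have hev : ∀ᶠ k in atTop, z ≤ a (φ k + N0) * x + b (φ k + N0) :=
      (harg.eventually (eventually_gt_nhds hz)).mono fun k hk => hk.le
    apply le_of_tendsto_of_tendsto (hgasub x hxD) (hgsub z hzD)
    filter_upwards [hev] with k hk
    exact hganti _ hk
  have hne1 : (𝓝[>] pnt ⊓ 𝓟 D).NeBot := nebot_right hD pnt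
  have hne2 : (𝓝[<] pnt ⊓ 𝓟 D).NeBot := nebot_left hD pnt
  have hVt1 : Tendsto V (𝓝[>] pnt ⊓ 𝓟 D) (𝓝 (V pnt)) :=
    (hVcont pnt hpD).tendsto.mono_left (le_trans inf_le_left nhdsWithin_le_nhds)
  have hVt2 : Tendsto V (𝓝[<] pnt ⊓ 𝓟 D) (𝓝 (V pnt)) :=
    (hVcont pnt hpD).tendsto.mono_left (le_trans inf_le_left nhdsWithin_le_nhds)
  have h1 : V pnt ≤ V x / S := by
    apply le_of_tendsto hVt1
    rw [eventually_inf_principal]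
    filter_upwards [self_mem_nhdsWithin] with z hz hzD
    exact hup z hzD hz
  have h2 : V x / S ≤ V pnt := by
    apply ge_of_tendsto hVt2
    rw [eventually_inf_principal]
    filter_upwards [self_mem_nhdsWithin] with z hz hzD
    exact hdown z hzD hz
  exact le_antisymm h1 h2

end Types

section Ext

lemma ext_of_rightCont {W1 W2 : ℝ → ℝ≥0∞} {D' : Set ℝ} (hD' : D'ᶜ.Countable)
    (h1 : ∀ x, ContinuousWithinAt W1 (Ici x) x) (h2 : ∀ x, ContinuousWithinAt W2 (Ici x) x)
    (heq : ∀ x ∈ D', W1 x = W2 x) : ∀ x, W1 x = W2 x := by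
  intro x
  have hne : (𝓝[>] x ⊓ 𝓟 D').NeBot := nebot_right hD' x
  have hle : (𝓝[>] x ⊓ 𝓟 D') ≤ 𝓝[Ici x] x :=
    le_trans inf_le_left (nhdsWithin_mono x Ioi_subset_Ici_self)
  have t1 : Tendsto W1 (𝓝[>] x ⊓ 𝓟 D') (𝓝 (W1 x)) := (h1 x).mono_left hle
  have t2 : Tendsto W2 (𝓝[>] x ⊓ 𝓟 D') (𝓝 (W2 x)) := (h2 x).mono_left hle
  have heq' : W1 =ᶠ[𝓝[>] x ⊓ 𝓟 D'] W2 := by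
    rw [EventuallyEq, eventually_inf_principal]
    filter_upwards with z hz
    exact heq z hz
  exact tendsto_nhds_unique t1 (t2.congr' heq'.symm)

end Ext

section Qsec

variable {V : ℝ → ℝ≥0∞}

/-- generalized inverse of `V` at level `c` -/
noncomputable def Qf (V : ℝ → ℝ≥0∞) (c : ℝ) : ℝ := sInf {x | V x ≤ ENNReal.ofReal c}

variable (hVanti : Antitone V) (hVrc : ∀ x, ContinuousWithinAt V (Ici x) x)
    (hVbot : Tendsto V atBot (𝓝 ⊤)) (hVtop : Tendsto V atTop (𝓝 0))

include hVanti hVrc hVbot hVtop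

lemma Qf_spec {c : ℝ} (hc : 0 < c) (x : ℝ) :
    V x ≤ ENNReal.ofReal c ↔ Qf V c ≤ x := by
  set Sc := {x | V x ≤ ENNReal.ofReal c} with hSc
  have hSne : Sc.Nonempty := by
    have h0 : (0:ℝ≥0∞) < ENNReal.ofReal c := ENNReal.ofReal_pos.2 hc
    obtain ⟨w, hw⟩ := eventually_atTop.1 (hVtop.eventually (eventually_lt_nhds h0))
    exact ⟨w, (hw w le_rfl).le⟩
  have hSbdd : BddBelow Sc := by
    obtain ⟨w, hw⟩ := eventually_atBot.1
      (hVbot.eventually (eventually_gt_nhds ENNReal.ofReal_lt_top))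
    refine ⟨w, fun y hy => ?_⟩
    by_contra h
    push_neg at h
    exact absurd (lt_of_le_of_lt hy (hw y h.le)) (lt_irrefl _)
  have hQmem : V (Qf V c) ≤ ENNReal.ofReal c := by
    set Q := Qf V c with hQ
    have hne : (𝓝[Ici Q] Q ⊓ 𝓟 Sc).NeBot := by
      rw [((nhdsGE_basis_of_exists_gt (α := ℝ) (by exact ⟨Q + 1, by linarith⟩)).inf_principal Sc).neBot_iff]
      intro u hu
      obtain ⟨y, hyS, hyu⟩ := (csInf_lt_iff hSbdd hSne).1 hu
      exact ⟨y, ⟨csInf_le hSbdd hyS, hyu⟩, hyS⟩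
    have t1 : Tendsto V (𝓝[Ici Q] Q ⊓ 𝓟 Sc) (𝓝 (V Q)) := (hVrc Q).mono_left inf_le_left
    apply le_of_tendsto t1
    rw [eventually_inf_principal]
    filter_upwards with z hz
    exact hz
  constructor
  · intro hx
    exact csInf_le hSbdd hx
  · intro hx
    exact le_trans (hVanti hx) hQmem

lemma Qf_anti : AntitoneOn (Qf V) (Ioi 0) := by
  intro c hc c' hc' hcc
  have h1 : V (Qf V c) ≤ ENNReal.ofReal c :=
    (Qf_spec hVanti hVrc hVbot hVtop (mem_Ioi.1 hc) _).2 le_rfl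
  have h2 : V (Qf V c) ≤ ENNReal.ofReal c' := le_trans h1 (ENNReal.ofReal_le_ofReal hcc)
  exact (Qf_spec hVanti hVrc hVbot hVtop (mem_Ioi.1 hc') _).1 h2

end Qsec

section Linear

lemma linear_of_additive_monotone (M : ℝ → ℝ) (hadd : ∀ u v, M (u + v) = M u + M v)
    (hmono : Monotone M) : ∀ v, M v = M 1 * v := by
  have h0 : M 0 = 0 := by
    have := hadd 0 0
    simp only [add_zero] at this
    linarith
  have hnat : ∀ (n : ℕ) (x : ℝ), M (n * x) = n * M x := by
    intro n
    induction n with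
    | zero => intro x; simp [h0]
    | succ k ih =>
      intro x
      push_cast
      rw [add_mul, one_mul, hadd, ih]
      ring
  have hneg : ∀ x, M (-x) = -M x := by
    intro x
    have := hadd x (-x)
    simp only [add_neg_cancel, h0] at this
    linarith
  have hint : ∀ (k : ℤ) (x : ℝ), M (k * x) = k * M x := by
    intro k x
    rcases le_or_gt 0 k with h | h
    · lift k to ℕ using h
      push_cast
      exact hnat k x
    · have hk : 0 ≤ -k := by omega
      lift -k to ℕ using hk with n hn
      have hk' : k = -(n:ℤ) := by omega
      have : (k:ℝ) = -(n:ℝ) := by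
        rw [hk']; push_cast; ring
      rw [this, neg_mul, hneg, hnat n x]
      ring
  have hrat : ∀ (q : ℚ), M q = q * M 1 := by
    intro q
    have hden : (0:ℝ) < q.den := by positivity
    have hqd : (q.den : ℝ) * (q : ℝ) = (q.num : ℝ) := by
      rw [mul_comm]
      rw [← Rat.cast_natCast, ← Rat.cast_mul, Rat.mul_den_eq_num]
      push_cast
      ring
    have h1 : M ((q.den : ℝ) * (q:ℝ)) = (q.den:ℝ) * M q := hnat q.den _
    have h2 : M ((q.num : ℝ)) = (q.num:ℝ) * M 1 := by
      have := hint q.num 1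
      simpa using this
    rw [hqd] at h1
    rw [h2] at h1
    have hdne : (q.den:ℝ) ≠ 0 := ne_of_gt hden
    have : M q = ((q.num : ℝ) / q.den) * M 1 := by
      rw [div_mul_eq_mul_div, eq_div_iff hdne]
      linear_combination -h1
    rw [this, Rat.cast_def]
  have hM1 : 0 ≤ M 1 := by
    have := hmono (show (0:ℝ) ≤ 1 by norm_num)
    rw [h0] at this
    exact this
  intro v
  apply le_antisymm
  · by_contra hcon
    push_neg at hcon
    set ε := (M v - M 1 * v)/(M 1 + 1) with hε
    have hεpos : 0 < ε := by
      apply div_pos (by linarith) (by linarith)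
    obtain ⟨q, hq1, hq2⟩ := exists_rat_btwn (show v < v + ε by linarith)
    have h1 : M v ≤ M q := hmono hq1.le
    rw [hrat q] at h1
    have hεid : ε * (M 1 + 1) = M v - M 1 * v := by
      rw [hε]
      field_simp
    nlinarith [hεid, mul_le_mul_of_nonneg_right hq2.le hM1, hεpos]
  · by_contra hcon
    push_neg at hcon
    set ε := (M 1 * v - M v)/(M 1 + 1) with hε
    have hεpos : 0 < ε := by
      apply div_pos (by linarith) (by linarith)
    obtain ⟨q, hq1, hq2⟩ := exists_rat_btwn (show v - ε < v by linarith)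
    have h1 : M q ≤ M v := hmono hq2.le
    rw [hrat q] at h1
    have hεid : ε * (M 1 + 1) = M 1 * v - M v := by
      rw [hε]
      field_simp
    nlinarith [hεid, mul_le_mul_of_nonneg_right hq1.le hM1, hεpos]

end Linear

section Cauchy

lemma cauchy_solve {U : ℝ → ℝ} (hm : MonotoneOn U (Ioi 0)) {a b : ℝ → ℝ}
    (ha : ∀ s, 0 < s → 0 < a s)
    (hfe : ∀ s, 0 < s → ∀ y, 0 < y → U (s * y) = a s * U y + b s)
    (hnc : ∃ y, 0 < y ∧ U y ≠ U 1) :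
    (∃ c > 0, ∀ y, 0 < y → U y = c * Real.log y + U 1) ∨
    (∃ θ : ℝ, θ ≠ 0 ∧ ∃ c : ℝ, 0 < c * θ ∧ ∀ y, 0 < y → U y = c * (y ^ θ - 1) + U 1) := by
  set W : ℝ → ℝ := fun y => U y - U 1 with hWdef
  have hW1 : W 1 = 0 := by simp [hWdef]
  have hWfe : ∀ s, 0 < s → ∀ y, 0 < y → W (s * y) = a s * W y + W s := by
    intro s hs y hy
    have h1 := hfe s hs y hy
    have h2 := hfe s hs 1 one_pos
    rw [mul_one] at h2
    simp only [hWdef]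
    linear_combination h1 - h2
  have hsymm : ∀ s, 0 < s → ∀ y, 0 < y → (a s - 1) * W y = (a y - 1) * W s := by
    intro s hs y hy
    have h1 := hWfe s hs y hy
    have h2 := hWfe y hy s hs
    rw [mul_comm] at h2
    linear_combination h2 - h1
  obtain ⟨y₀, hy₀, hy₀ne⟩ := hnc
  have hWy₀ : W y₀ ≠ 0 := sub_ne_zero.2 hy₀ne
  have hWmono : ∀ y z, 0 < y → 0 < z → y ≤ z → W y ≤ W z := by
    intro y z hy hz hyz
    have := hm (mem_Ioi.2 hy) (mem_Ioi.2 hz) hyz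
    simp only [hWdef]
    linarith
  by_cases hcase : ∀ s, 0 < s → a s = 1
  · left
    set M : ℝ → ℝ := fun v => W (Real.exp v) with hM
    have hMadd : ∀ u v, M (u + v) = M u + M v := by
      intro u v
      simp only [hM]
      rw [Real.exp_add]
      have h := hWfe (Real.exp u) (Real.exp_pos u) (Real.exp v) (Real.exp_pos v)
      rw [hcase _ (Real.exp_pos u), one_mul] at h
      rw [h]; ring
    have hMmono : Monotone M := fun u v huv =>
      hWmono _ _ (Real.exp_pos u) (Real.exp_pos v) (Real.exp_le_exp.2 huv)
    have hlin := linear_of_additive_monotone M hMadd hMmono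
    have hMne : M (Real.log y₀) ≠ 0 := by
      simp only [hM]
      rw [Real.exp_log hy₀]
      exact hWy₀
    have hM1ne : M 1 ≠ 0 := by
      intro h
      apply hMne
      rw [hlin (Real.log y₀), h, zero_mul]
    have hM1pos : 0 < M 1 := by
      rcases lt_or_gt_of_ne hM1ne with h | h
      · exfalso
        have h2 := hMmono (show (0:ℝ) ≤ 1 by norm_num)
        have hM0 : M 0 = 0 := by
          simp only [hM]
          rw [Real.exp_zero]
          exact hW1
        linarith
      · exact h
    refine ⟨M 1, hM1pos, fun y hy => ?_⟩
    have h := hlin (Real.log y)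
    simp only [hM] at h
    rw [Real.exp_log hy] at h
    simp only [hWdef] at h
    simp only [hM, hWdef]
    linarith
  · right
    push_neg at hcase
    obtain ⟨s₀, hs₀, has₀⟩ := hcase
    have has₀' : a s₀ - 1 ≠ 0 := sub_ne_zero.2 has₀
    have hWs₀ : W s₀ ≠ 0 := by
      intro h
      have h2 := hsymm s₀ hs₀ y₀ hy₀
      rw [h, mul_zero] at h2
      rcases mul_eq_zero.1 h2 with h3 | h3
      exacts [has₀' h3, hWy₀ h3]
    set c : ℝ := W s₀ / (a s₀ - 1) with hc
    have hcne : c ≠ 0 := div_ne_zero hWs₀ has₀'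
    have haW : ∀ y, 0 < y → W y = c * (a y - 1) := by
      intro y hy
      have h1 := hsymm s₀ hs₀ y hy
      rw [hc, div_mul_eq_mul_div, eq_div_iff has₀']
      linear_combination h1
    have hamul : ∀ s, 0 < s → ∀ y, 0 < y → a (s * y) = a s * a y := by
      intro s hs y hy
      have h1 := hWfe s hs y hy
      rw [haW _ (mul_pos hs hy), haW y hy, haW s hs] at h1
      have h2 : c * (a (s*y) - 1) = c * (a s * a y - 1) := by linear_combination h1
      have h3 := mul_left_cancel₀ hcne h2
      linarith
    set h : ℝ → ℝ := fun v => Real.log (a (Real.exp v)) with hh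
    have hhadd : ∀ u v, h (u + v) = h u + h v := by
      intro u v
      simp only [hh]
      rw [Real.exp_add, hamul _ (Real.exp_pos u) _ (Real.exp_pos v),
        Real.log_mul (ha _ (Real.exp_pos u)).ne' (ha _ (Real.exp_pos v)).ne']
    have hlin : ∀ v, h v = h 1 * v := by
      rcases lt_or_gt_of_ne hcne with hcneg | hcpos
      · -- c < 0 : h antitone, apply to -h
        have hmono : Monotone (fun v => -h v) := by
          intro u v huv
          simp only [hh, neg_le_neg_iff]
          apply Real.log_le_log (ha _ (Real.exp_pos v))
          have hW := hWmono _ _ (Real.exp_pos u) (Real.exp_pos v) (Real.exp_le_exp.2 huv)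
          rw [haW _ (Real.exp_pos u), haW _ (Real.exp_pos v)] at hW
          -- c (a e^u - 1) ≤ c (a e^v -1), c < 0 ⇒ a e^v ≤ a e^u
          nlinarith
        have hNadd : ∀ u v, -h (u + v) = -h u + -h v := by
          intro u v
          rw [hhadd u v]; ring
        have hres := linear_of_additive_monotone (fun v => -h v) hNadd hmono
        intro v
        have hv := hres v
        linarith [hv]
      · have hmono : Monotone h := by
          intro u v huv
          simp only [hh]
          apply Real.log_le_log (ha _ (Real.exp_pos u))
          have hW := hWmono _ _ (Real.exp_pos u) (Real.exp_pos v) (Real.exp_le_exp.2 huv)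
          rw [haW _ (Real.exp_pos u), haW _ (Real.exp_pos v)] at hW
          nlinarith
        exact linear_of_additive_monotone h hhadd hmono
    set θ := h 1 with hθ
    have hay : ∀ y, 0 < y → a y = y ^ θ := by
      intro y hy
      have h1 : h (Real.log y) = θ * Real.log y := hlin (Real.log y)
      simp only [hh] at h1
      rw [Real.exp_log hy] at h1
      have h2 : a y = Real.exp (θ * Real.log y) := by
        rw [← h1, Real.exp_log (ha y hy)]
      rw [h2, Real.rpow_def_of_pos hy, mul_comm]
    have hθne : θ ≠ 0 := by
      intro h0
      apply has₀
      rw [hay s₀ hs₀, h0, Real.rpow_zero]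
    have hcθ : 0 < c * θ := by
      have he := hWmono 1 (Real.exp 1) one_pos (Real.exp_pos 1)
        (by linarith [Real.add_one_le_exp 1])
      rw [hW1, haW _ (Real.exp_pos 1), hay _ (Real.exp_pos 1), Real.exp_one_rpow] at he
      rcases lt_or_gt_of_ne hθne with hθneg | hθpos
      · have hexp : Real.exp θ < 1 := by
          rw [show (1:ℝ) = Real.exp 0 from (Real.exp_zero).symm]
          exact Real.exp_lt_exp.2 hθneg
        have hcneg : c ≤ 0 := by nlinarith
        have hclt : c < 0 := lt_of_le_of_ne hcneg hcne
        nlinarith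
      · have hexp : 1 < Real.exp θ := by
          rw [show (1:ℝ) = Real.exp 0 from (Real.exp_zero).symm]
          exact Real.exp_lt_exp.2 hθpos
        have hcge : 0 ≤ c := by nlinarith
        have hcpos : 0 < c := lt_of_le_of_ne hcge (Ne.symm hcne)
        nlinarith
    refine ⟨θ, hθne, c, hcθ, fun y hy => ?_⟩
    have := haW y hy
    simp only [hWdef] at this
    rw [hay y hy] at this
    linarith

end Cauchy

section FEall

lemma FE_everywhere {V : ℝ → ℝ≥0∞} {D : Set ℝ} (hD : Dᶜ.Countable)
    (hVrc : ∀ x, ContinuousWithinAt V (Ici x) x)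
    {A B : ℝ} (hA : 0 < A) {S : ℝ≥0∞} (hS0 : S ≠ 0)
    (hfe : ∀ x ∈ D, A * x + B ∈ D → V (A * x + B) = V x / S) :
    ∀ x, V (A * x + B) = V x / S := by
  set D' := D ∩ {x | A * x + B ∈ D} with hD'def
  have hD' : D'ᶜ.Countable := by
    rw [hD'def, Set.compl_inter]
    apply Set.Countable.union hD
    have h1 : {x | A * x + B ∈ D}ᶜ = (fun x => A * x + B) ⁻¹' Dᶜ := rfl
    rw [h1]
    have himg : (fun x => A * x + B) ⁻¹' Dᶜ = (fun y => (y - B)/A) '' Dᶜ := by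
      ext z
      simp only [mem_preimage, mem_image]
      constructor
      · intro hz
        exact ⟨A * z + B, hz, by field_simp; ring⟩
      · rintro ⟨y, hy, rfl⟩
        have h2 : A * ((y - B)/A) + B = y := by field_simp; ring
        rwa [h2]
    rw [himg]
    exact hD.image _
  have hrc1 : ∀ x, ContinuousWithinAt (fun x => V (A * x + B)) (Ici x) x := by
    intro x
    have haff : ContinuousWithinAt (fun y => A * y + B) (Ici x) x :=
      Continuous.continuousWithinAt (by continuity)
    have hmaps : MapsTo (fun y => A * y + B) (Ici x) (Ici (A * x + B)) := by
      intro y hy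
      simp only [mem_Ici] at hy ⊢
      nlinarith
    show ContinuousWithinAt (V ∘ fun y => A * y + B) (Ici x) x
    exact ContinuousWithinAt.comp (hVrc (A * x + B)) haff hmaps
  have hrc2 : ∀ x, ContinuousWithinAt (fun x => V x / S) (Ici x) x := by
    intro x
    exact (ENNReal.continuous_div_const S hS0).continuousAt.comp_continuousWithinAt (hVrc x)
  exact ext_of_rightCont hD' hrc1 hrc2 (fun x hx => hfe x hx.1 hx.2)

end FEall

section QFE

variable {V : ℝ → ℝ≥0∞}
variable (hVanti : Antitone V) (hVrc : ∀ x, ContinuousWithinAt V (Ici x) x)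
    (hVbot : Tendsto V atBot (𝓝 ⊤)) (hVtop : Tendsto V atTop (𝓝 0))

include hVanti hVrc hVbot hVtop

lemma Q_fe {A B : ℝ} (hA : 0 < A) {s : ℝ} (hs : 0 < s)
    (hfe : ∀ x, V (A * x + B) = V x / ENNReal.ofReal s) :
    ∀ c, 0 < c → Qf V (c / s) = A * Qf V c + B := by
  intro c hc
  have hS0 : ENNReal.ofReal s ≠ 0 := (ENNReal.ofReal_pos.2 hs).ne'
  have hSt : ENNReal.ofReal s ≠ ⊤ := ENNReal.ofReal_ne_top
  have key : ∀ x : ℝ, (Qf V (c/s) ≤ x ↔ A * Qf V c + B ≤ x) := by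
    intro x
    rw [← Qf_spec hVanti hVrc hVbot hVtop (div_pos hc hs) x]
    have hxa : V x = V ((x - B)/A) / ENNReal.ofReal s := by
      have h1 := hfe ((x - B)/A)
      rw [show A * ((x-B)/A) + B = x from by field_simp; ring] at h1
      exact h1
    rw [hxa, ENNReal.div_le_iff hS0 hSt]
    have hmul : ENNReal.ofReal (c/s) * ENNReal.ofReal s = ENNReal.ofReal c := by
      rw [← ENNReal.ofReal_mul (by positivity)]
      congr 1
      field_simp
    rw [hmul, Qf_spec hVanti hVrc hVbot hVtop hc ((x - B)/A)]
    rw [le_div_iff₀ hA]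
    constructor <;> intro h <;> linarith
  have h1 := (key (A * Qf V c + B)).2 le_rfl
  have h2 := (key (Qf V (c/s))).1 le_rfl
  linarith

lemma V_eval_of_threshold {x w0 : ℝ} (hw0 : 0 < w0)
    (hiff : ∀ w, 0 < w → (Qf V w ≤ x ↔ w0 ≤ w)) : V x = ENNReal.ofReal w0 := by
  apply le_antisymm
  · exact (Qf_spec hVanti hVrc hVbot hVtop hw0 x).2 ((hiff w0 hw0).2 le_rfl)
  · have hk : Tendsto (fun k : ℕ => w0 / ((k:ℝ) + 2)) atTop (𝓝 0) := by
      apply Tendsto.div_atTop tendsto_const_nhds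
      exact tendsto_atTop_add_const_right _ 2 tendsto_natCast_atTop_atTop
    have hseq : Tendsto (fun k : ℕ => ENNReal.ofReal (w0 - w0 / ((k:ℝ)+2))) atTop
        (𝓝 (ENNReal.ofReal w0)) := by
      apply ENNReal.tendsto_ofReal
      have h2 : Tendsto (fun k : ℕ => w0 - w0 / ((k:ℝ)+2)) atTop (𝓝 (w0 - 0)) :=
        Tendsto.sub tendsto_const_nhds hk
      simpa using h2
    apply le_of_tendsto hseq
    filter_upwards with k
    have hk2 : (0:ℝ) < (k:ℝ) + 2 := by positivity
    have hwk : 0 < w0 - w0/((k:ℝ)+2) := by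
      have : w0 / ((k:ℝ)+2) < w0 := by
        rw [div_lt_iff₀ hk2]
        nlinarith
      linarith
    have hnot : ¬ (Qf V (w0 - w0/((k:ℝ)+2)) ≤ x) := by
      intro hle
      have h3 := (hiff _ hwk).1 hle
      have hd : 0 < w0/((k:ℝ)+2) := by positivity
      linarith
    have : ¬ (V x ≤ ENNReal.ofReal (w0 - w0/((k:ℝ)+2))) := by
      intro hle
      exact hnot ((Qf_spec hVanti hVrc hVbot hVtop hwk x).1 hle)
    exact (not_le.1 this).le

lemma V_eval_top {x : ℝ} (hnone : ∀ w, 0 < w → ¬ Qf V w ≤ x) : V x = ⊤ := by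
  have hseq : Tendsto (fun k : ℕ => (ENNReal.ofReal ((k:ℝ)+1))) atTop (𝓝 ⊤) := by
    apply ENNReal.tendsto_ofReal_atTop.comp
    exact tendsto_atTop_add_const_right _ 1 tendsto_natCast_atTop_atTop
  have hge : ∀ k : ℕ, ENNReal.ofReal ((k:ℝ)+1) ≤ V x := by
    intro k
    have hk : (0:ℝ) < (k:ℝ)+1 := by positivity
    have : ¬ (V x ≤ ENNReal.ofReal ((k:ℝ)+1)) := by
      intro hle
      exact hnone _ hk ((Qf_spec hVanti hVrc hVbot hVtop hk x).1 hle)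
    exact (not_le.1 this).le
  have := le_of_tendsto hseq (Eventually.of_forall hge)
  exact top_unique this

lemma V_eval_zero {x : ℝ} (hall : ∀ w, 0 < w → Qf V w ≤ x) : V x = 0 := by
  have hk : Tendsto (fun k : ℕ => ENNReal.ofReal (1 / ((k:ℝ) + 1))) atTop (𝓝 0) := by
    rw [show (0:ℝ≥0∞) = ENNReal.ofReal 0 from ENNReal.ofReal_zero.symm]
    apply ENNReal.tendsto_ofReal
    apply Tendsto.div_atTop tendsto_const_nhds
    exact tendsto_atTop_add_const_right _ 1 tendsto_natCast_atTop_atTop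
  have hle : ∀ k : ℕ, V x ≤ ENNReal.ofReal (1 / ((k:ℝ)+1)) := by
    intro k
    have hkpos : (0:ℝ) < 1/((k:ℝ)+1) := by positivity
    exact (Qf_spec hVanti hVrc hVbot hVtop hkpos x).2 (hall _ hkpos)
  have := ge_of_tendsto hk (Eventually.of_forall hle)
  exact le_antisymm this zero_le

end QFE

section Gfinal

variable (hψ : IsArchimedeanGenerator ψ) (hstrict : ∀ t : ℝ, 0 ≤ t → 0 < ψ t)
    (hψinv : ∀ u ∈ Ioc (0:ℝ) 1, 0 ≤ ψinv u ∧ ψ (ψinv u) = u)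
    (hρ : ρ ∈ Ioc (0:ℝ) 1)

include hψ hstrict hψinv hρ

lemma G_from_V {G : ℝ → ℝ} {x : ℝ} {v : ℝ} (hv : 0 ≤ v) (hGx : G x ∈ Icc (0:ℝ) 1)
    (hVx : Phi ψinv ρ (G x) = ENNReal.ofReal v) : G x = ψ (v ^ (1/ρ)) := by
  have hGpos : 0 < G x := by
    by_contra h
    rw [show Phi ψinv ρ (G x) = ⊤ from if_neg h] at hVx
    exact ENNReal.ofReal_ne_top hVx.symm
  rw [show Phi ψinv ρ (G x) = ENNReal.ofReal ((ψinv (G x)) ^ ρ) from if_pos hGpos] at hVx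
  have hinvnn : 0 ≤ ψinv (G x) := (hψinv _ ⟨hGpos, hGx.2⟩).1
  have h1 : (ψinv (G x)) ^ ρ = v := by
    rwa [ENNReal.ofReal_eq_ofReal_iff (Real.rpow_nonneg hinvnn _) hv] at hVx
  have h2 : ψinv (G x) = v ^ (1/ρ) := by
    rw [← h1, one_div]
    exact (Real.rpow_rpow_inv hinvnn (ne_of_gt hρ.1)).symm
  rw [← h2]
  exact ((hψinv _ ⟨hGpos, hGx.2⟩).2).symm

omit hψ hρ in
lemma G_zero_from_V {G : ℝ → ℝ} {x : ℝ} (hGx : 0 ≤ G x)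
    (hVx : Phi ψinv ρ (G x) = ⊤) : G x = 0 := by
  by_contra h
  have hpos : 0 < G x := lt_of_le_of_ne hGx (Ne.symm h)
  rw [show Phi ψinv ρ (G x) = ENNReal.ofReal ((ψinv (G x)) ^ ρ) from if_pos hpos] at hVx
  exact ENNReal.ofReal_ne_top hVx

end Gfinal

end Archimax

set_option maxHeartbeats 2000000 in
/-- Proposition on uniqueness of Archimax limits. -/
theorem archimax_limit_uniqueness
    (ψ ψinv : ℝ → ℝ) (η : ℕ → ℝ) (r : ℕ → ℝ) (ρ : ℝ) (kap : ℝ → ℝ)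
    (hψ : IsArchimedeanGenerator ψ) (hstrict : ∀ t : ℝ, 0 ≤ t → 0 < ψ t)
    (hψinv : ∀ u ∈ Ioc (0:ℝ) 1, 0 ≤ ψinv u ∧ ψ (ψinv u) = u)
    (hη : ∀ n, 0 < η n) (hηtop : Tendsto η atTop atTop)
    (hρ : ρ ∈ Ioc (0:ℝ) 1)
    (hRV : ∀ lam : ℝ, 0 < lam →
      Tendsto (fun t : ℝ => (1 - ψ (1 / (lam * t))) / (1 - ψ (1 / t))) atTop
        (nhds (lam ^ (-ρ))))
    (hr : ∀ n, r n = 1 / (1 - ψ (1 / η n)))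
    (hkap : Set.BijOn kap (Ioi 0) (Ioi 0))
    (hkapconv : ∀ t : ℝ, 0 < t →
      Tendsto (fun n : ℕ => η (Nat.ceil ((n : ℝ) * t)) / η n) atTop (nhds (kap t))) :
    (∀ t : ℝ, 0 < t →
      Tendsto (fun n : ℕ => r (Nat.ceil ((n : ℝ) * t)) / r n) atTop (nhds (kap t ^ ρ))) ∧
    ∀ F G : ℝ → ℝ, ∀ δ : ℕ → ℝ → ℝ, ∀ cs ds : ℕ → ℝ,
      IsDistFun F → Continuous F →
      (∀ n, δ n 0 = 0 ∧ ∀ u ∈ Ioc (0:ℝ) 1, δ n u = ψ (η n * ψinv u)) →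
      (∀ n, 0 < cs n) → IsDistFun G → ¬ IsDegenerateDF G →
      (∀ x, ContinuousAt G x →
        Tendsto (fun n => δ n (F (cs n * x + ds n))) atTop (nhds (G x))) →
      ∃ H : ℝ → ℝ, IsGEV H ∧
        ∀ x, G x = if H x = 0 then 0 else ψ ((-Real.log (H x)) ^ (1 / ρ)) := by
  have hρpos := hρ.1
  constructor
  · intro t ht
    exact Archimax.part_one hψ hstrict hη hηtop hRV hr hkap hkapconv ht
  · intro F G δ cs ds hF hFcont hδ hcs hG hnd hconv
    classical
    set D : Set ℝ := {x | ContinuousAt G x} with hDdef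
    have hDc : Dᶜ.Countable := Archimax.G_cont_cocountable hG
    set V : ℝ → ℝ≥0∞ := fun x => Archimax.Phi ψinv ρ (G x) with hVdef
    set g : ℕ → ℝ → ℝ≥0∞ :=
      fun n x => ENNReal.ofReal (r n * (1 - F (cs n * x + ds n))) with hgdef
    have hrpos : ∀ n, 0 < r n := by
      intro n
      rw [hr n]
      have h1 := Archimax.tailf_pos hψ hstrict (hη n)
      simp only [Archimax.tailf] at h1
      positivity
    have hganti : ∀ n, Antitone (g n) := by
      intro n x y hxy
      apply ENNReal.ofReal_le_ofReal
      have h1 : F (cs n * x + ds n) ≤ F (cs n * y + ds n) := by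
        apply hF.1
        nlinarith [hcs n]
      nlinarith [hrpos n]
    have hgconv : ∀ x ∈ D, Tendsto (fun n => g n x) atTop (𝓝 (V x)) := by
      intro x hx
      exact Archimax.conv_T hψ hstrict hψinv hη hηtop hρ hRV hr hδ
        (fun n => hF.2.2.2.2 _) (hG.2.2.2.2 x) (hconv x hx)
    have hVanti : Antitone V := Archimax.V_anti hψ hstrict hψinv hρ hG
    have hVrc : ∀ x, ContinuousWithinAt V (Ici x) x :=
      Archimax.V_rightCont hψ hstrict hψinv hρ hG
    have hVbot : Tendsto V atBot (𝓝 ⊤) := Archimax.V_atBot hψ hstrict hψinv hρ hG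
    have hVtop : Tendsto V atTop (𝓝 0) := Archimax.V_atTop hψ hstrict hψinv hρ hG
    have hVcont : ∀ x ∈ D, ContinuousAt V x :=
      fun x hx => Archimax.V_contAt hψ hstrict hψinv hρ hG hx
    obtain ⟨x0, x1, hx01, hx0D, hx1D, hGx0, hGx1⟩ := Archimax.exists_two_cont_points hG hnd
    have hVne : ∀ z : ℝ, G z ∈ Ioo (0:ℝ) 1 → V z ≠ 0 ∧ V z ≠ ⊤ := by
      intro z hz
      constructor
      · intro h
        have h2 := (Archimax.Phi_eq_zero_iff hψ hstrict hψinv hρ ⟨hz.1.le, hz.2.le⟩).1 h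
        exact absurd h2 (ne_of_lt hz.2)
      · intro h
        exact (Archimax.Phi_eq_top_iff.1 h) hz.1
    have hV00 := (hVne x0 hGx0).1
    have hV0t := (hVne x0 hGx0).2
    have hV10 := (hVne x1 hGx1).1
    have hV1t := (hVne x1 hGx1).2
    -- the affine scaling relation for every s > 0
    have hFE : ∀ s : ℝ, 0 < s → ∃ A B : ℝ, 0 < A ∧
        ∀ x, V (A * x + B) = V x / ENNReal.ofReal s := by
      intro s hs
      obtain ⟨t, htpos, hkapt⟩ : ∃ t, 0 < t ∧ kap t ^ ρ = s := by
        obtain ⟨t, htI, hkt⟩ := hkap.surjOn (mem_Ioi.2 (Real.rpow_pos_of_pos hs (1/ρ)))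
        refine ⟨t, htI, ?_⟩
        rw [hkt, ← Real.rpow_mul hs.le, one_div, inv_mul_cancel₀ (ne_of_gt hρpos),
          Real.rpow_one]
      set m : ℕ → ℕ := fun n => Nat.ceil ((n:ℝ) * t) with hm
      have hmtop : Tendsto m atTop atTop := by
        rw [tendsto_atTop]
        intro bb
        rw [eventually_atTop]
        refine ⟨Nat.ceil ((bb:ℝ)/t), fun n hn => ?_⟩
        have h1 : ((bb:ℝ)/t) ≤ (n:ℝ) :=
          le_trans (Nat.le_ceil _) (by exact_mod_cast hn)
        have h2 : (bb:ℝ) ≤ (n:ℝ) * t := by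
          rw [div_le_iff₀ htpos] at h1
          linarith
        have h3 : (bb:ℝ) ≤ (Nat.ceil ((n:ℝ) * t) : ℝ) := le_trans h2 (Nat.le_ceil _)
        exact_mod_cast h3
      have hrconv : Tendsto (fun n => r (m n) / r n) atTop (𝓝 s) := by
        have h1 := Archimax.part_one hψ hstrict hη hηtop hRV hr hkap hkapconv htpos
        rwa [hkapt] at h1
      set a' : ℕ → ℝ := fun n => cs (m n) / cs n with ha'
      set b' : ℕ → ℝ := fun n => (ds (m n) - ds n) / cs n with hb'
      have ha'pos : ∀ n, 0 < a' n := fun n => div_pos (hcs _) (hcs n)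
      have hconv2 : ∀ x ∈ D, Tendsto (fun n => g n (a' n * x + b' n)) atTop
          (𝓝 (V x / ENNReal.ofReal s)) := by
        intro x hx
        have hid : ∀ n, cs n * (a' n * x + b' n) + ds n = cs (m n) * x + ds (m n) := by
          intro n
          have hcne := (hcs n).ne'
          simp only [ha', hb']
          field_simp
          ring
        have hsplit : ∀ n, g n (a' n * x + b' n)
            = ENNReal.ofReal (r n / r (m n)) *
              ENNReal.ofReal (r (m n) * (1 - F (cs (m n) * x + ds (m n)))) := by
          intro n
          simp only [hgdef]
          rw [hid n, ← ENNReal.ofReal_mul (div_nonneg (hrpos n).le (hrpos (m n)).le)]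
          congr 1
          field_simp [(hrpos (m n)).ne']
        have hlim1 : Tendsto (fun n => ENNReal.ofReal (r n / r (m n))) atTop
            (𝓝 (ENNReal.ofReal (1/s))) := by
          apply ENNReal.tendsto_ofReal
          have h2 := hrconv.inv₀ (ne_of_gt hs)
          rw [one_div]
          exact h2.congr (fun n => by rw [inv_div])
        have hlim2 : Tendsto
            (fun n => ENNReal.ofReal (r (m n) * (1 - F (cs (m n) * x + ds (m n)))))
            atTop (𝓝 (V x)) := (hgconv x hx).comp hmtop
        have hmul := ENNReal.Tendsto.mul hlim1
          (Or.inl (ENNReal.ofReal_pos.2 (by positivity)).ne') hlim2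
          (Or.inr ENNReal.ofReal_ne_top)
        have hval : ENNReal.ofReal (1/s) * V x = V x / ENNReal.ofReal s := by
          rw [ENNReal.div_eq_inv_mul, one_div, ENNReal.ofReal_inv_of_pos hs]
        rw [hval] at hmul
        exact hmul.congr (fun n => (hsplit n).symm)
      obtain ⟨A, B, hA, hfeD⟩ := Archimax.types_lemma hganti hDc hgconv ha'pos
        ((ENNReal.ofReal_pos.2 hs).ne') ENNReal.ofReal_ne_top hconv2 hVbot hVtop hVcont
        hx01 hx0D hx1D hV00 hV0t hV10 hV1t
      exact ⟨A, B, hA,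
        Archimax.FE_everywhere hDc hVrc hA ((ENNReal.ofReal_pos.2 hs).ne') hfeD⟩
    choose! A B hApos hABfe using hFE
    set U : ℝ → ℝ := fun y => Archimax.Qf V (1/y) with hU
    have hQfe : ∀ s, 0 < s → ∀ c, 0 < c →
        Archimax.Qf V (c / s) = A s * Archimax.Qf V c + B s :=
      fun s hs => Archimax.Q_fe hVanti hVrc hVbot hVtop (hApos s hs) hs (hABfe s hs)
    have hUfe : ∀ s, 0 < s → ∀ y, 0 < y → U (s * y) = A s * U y + B s := by
      intro s hs y hy
      simp only [hU]
      rw [show 1/(s*y) = (1/y)/s from by field_simp]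
      exact hQfe s hs (1/y) (by positivity)
    have hUmono : MonotoneOn U (Ioi 0) := by
      intro y hy z hz hyz
      apply Archimax.Qf_anti hVanti hVrc hVbot hVtop (mem_Ioi.2 (by simp at hz; positivity))
        (mem_Ioi.2 (by simp at hy; positivity))
      exact one_div_le_one_div_of_le (mem_Ioi.1 hy) hyz
    set v0 : ℝ := (ψinv (G x0)) ^ ρ with hv0
    have hv0pos : 0 < v0 :=
      Real.rpow_pos_of_pos (Archimax.psiinv_pos hψ hstrict hψinv hGx0) ρ
    have hVx0 : V x0 = ENNReal.ofReal v0 := if_pos hGx0.1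
    have hQle : Archimax.Qf V v0 ≤ x0 :=
      (Archimax.Qf_spec hVanti hVrc hVbot hVtop hv0pos x0).1 (le_of_eq hVx0)
    have hQgt : ¬ Archimax.Qf V (v0/2) ≤ x0 := by
      intro h
      have h2 := (Archimax.Qf_spec hVanti hVrc hVbot hVtop (by positivity) x0).2 h
      rw [hVx0, ENNReal.ofReal_le_ofReal_iff (by positivity)] at h2
      linarith
    have hUnc : ∃ y, 0 < y ∧ U y ≠ U 1 := by
      by_cases hq : Archimax.Qf V v0 = Archimax.Qf V 1
      · refine ⟨2/v0, by positivity, ?_⟩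
        simp only [hU]
        rw [show 1/(2/v0) = v0/2 from by field_simp, show 1/(1:ℝ) = 1 from by norm_num]
        intro h
        apply hQgt
        rw [h, ← hq]
        exact hQle
      · refine ⟨1/v0, by positivity, ?_⟩
        simp only [hU]
        rw [one_div_one_div, show 1/(1:ℝ) = 1 from by norm_num]
        exact hq
    rcases Archimax.cauchy_solve hUmono hApos hUfe hUnc with
      ⟨c, hc, hUform⟩ | ⟨θ, hθne, c, hcθ, hUform⟩
    · -- Gumbel case
      set d := U 1 with hd
      refine ⟨GEVcdf 0 d c, ⟨0, d, c, hc, rfl⟩, ?_⟩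
      intro x
      set w0 : ℝ := Real.exp ((d - x)/c) with hw0
      have hw0pos : 0 < w0 := Real.exp_pos _
      have hVx : V x = ENNReal.ofReal w0 := by
        apply Archimax.V_eval_of_threshold hVanti hVrc hVbot hVtop hw0pos
        intro w hw
        have hQw : Archimax.Qf V w = -(c * Real.log w) + d := by
          have h1 := hUform (1/w) (by positivity)
          simp only [hU] at h1
          rw [one_div_one_div] at h1
          rw [h1, one_div, Real.log_inv]
          ring
        rw [hQw, hw0]
        constructor
        · intro h
          have h2 : (d - x)/c ≤ Real.log w := by
            rw [div_le_iff₀ hc]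
            nlinarith
          calc Real.exp ((d-x)/c) ≤ Real.exp (Real.log w) := Real.exp_le_exp.2 h2
            _ = w := Real.exp_log hw
        · intro h
          have h2 : (d - x)/c ≤ Real.log w := (Real.le_log_iff_exp_le hw).2 h
          rw [div_le_iff₀ hc] at h2
          nlinarith
      have hGx : G x = ψ (w0 ^ (1/ρ)) := by
        apply Archimax.G_from_V hψ hstrict hψinv hρ hw0pos.le (hG.2.2.2.2 x)
        exact hVx
      have hHx : GEVcdf 0 d c x = Real.exp (-w0) := by
        have h1 : GEVcdf 0 d c x = Real.exp (-Real.exp (-(x - d) / c)) := by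
          simp [GEVcdf]
        rw [h1, show -(x - d)/c = (d - x)/c from by ring, hw0]
      rw [hHx, if_neg (Real.exp_ne_zero _), Real.log_exp, neg_neg]
      exact hGx
    · -- Fréchet / Weibull case
      set d := U 1 with hd
      have hcne : c ≠ 0 := by
        intro h
        rw [h, zero_mul] at hcθ
        exact lt_irrefl 0 hcθ
      refine ⟨GEVcdf θ d (c*θ), ⟨θ, d, c*θ, hcθ, rfl⟩, ?_⟩
      intro x
      set P : ℝ := 1 + (x - d)/c with hP
      have hPae : 1 + θ * (x - d) / (c * θ) = P := by
        rw [hP]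
        congr 1
        rw [mul_comm c θ, mul_div_mul_left _ _ hθne]
      have hxd : x - d = c * (P - 1) := by
        rw [hP]
        field_simp
        ring
      have hQw : ∀ w : ℝ, 0 < w → Archimax.Qf V w = c * (w ^ (-θ) - 1) + d := by
        intro w hw
        have h1 := hUform (1/w) (by positivity)
        simp only [hU] at h1
        rw [one_div_one_div] at h1
        rw [h1, one_div, Real.inv_rpow hw.le, ← Real.rpow_neg hw.le]
      have hHdef : GEVcdf θ d (c*θ) x =
          if 0 < P then Real.exp (-P ^ (-1/θ)) else if 0 < θ then 0 else 1 := by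
        simp only [GEVcdf, if_neg hθne, hPae]
      rcases le_or_gt P 0 with hPle | hPpos
      · rcases lt_or_gt_of_ne hθne with hθneg | hθpos
        · -- θ < 0, c < 0 : G x = 1, H x = 1
          have hcneg : c < 0 := by nlinarith
          have hVx : V x = 0 := by
            apply Archimax.V_eval_zero hVanti hVrc hVbot hVtop
            intro w hw
            rw [hQw w hw]
            have hrp : 0 < w ^ (-θ) := Real.rpow_pos_of_pos hw _
            nlinarith [hxd, mul_pos (neg_pos.2 hcneg) (sub_pos.2 (lt_of_le_of_lt hPle hrp))]
          have hGx : G x = ψ ((0:ℝ) ^ (1/ρ)) := by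
            apply Archimax.G_from_V hψ hstrict hψinv hρ le_rfl (hG.2.2.2.2 x)
            rw [ENNReal.ofReal_zero]
            exact hVx
          rw [hHdef, if_neg (not_lt.2 hPle), if_neg (not_lt.2 hθneg.le)]
          rw [if_neg one_ne_zero, Real.log_one, neg_zero]
          exact hGx
        · -- θ > 0, c > 0 : G x = 0, H x = 0
          have hcpos : 0 < c := by nlinarith
          have hVx : V x = ⊤ := by
            apply Archimax.V_eval_top hVanti hVrc hVbot hVtop
            intro w hw hle
            rw [hQw w hw] at hle
            have hrp : 0 < w ^ (-θ) := Real.rpow_pos_of_pos hw _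
            nlinarith [hxd, mul_pos hcpos hrp,
              mul_nonpos_of_nonneg_of_nonpos hcpos.le hPle]
          have hGx : G x = 0 :=
            Archimax.G_zero_from_V hstrict hψinv (hG.2.2.2.2 x).1 hVx
          rw [hHdef, if_neg (not_lt.2 hPle), if_pos hθpos, if_pos rfl]
          exact hGx
      · -- interior region
        set w0 : ℝ := P ^ (-(1/θ)) with hw0
        have hw0pos : 0 < w0 := Real.rpow_pos_of_pos hPpos _
        have hw0log : Real.log w0 = -Real.log P / θ := by
          rw [hw0, Real.log_rpow hPpos]
          ring
        have hVx : V x = ENNReal.ofReal w0 := by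
          apply Archimax.V_eval_of_threshold hVanti hVrc hVbot hVtop hw0pos
          intro w hw
          rw [hQw w hw]
          have hrp : 0 < w ^ (-θ) := Real.rpow_pos_of_pos hw _
          have hlog : Real.log (w ^ (-θ)) = -θ * Real.log w := Real.log_rpow hw _
          have hchain : w0 ≤ w ↔ -Real.log P / θ ≤ Real.log w := by
            rw [← hw0log]
            exact (Real.log_le_log_iff hw0pos hw).symm
          rcases lt_or_gt_of_ne hθne with hθneg | hθpos
          · -- θ < 0, c < 0
            have hcneg : c < 0 := by nlinarith
            constructor
            · intro h
              have h2 : P ≤ w ^ (-θ) := by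
                by_contra hcon
                push_neg at hcon
                nlinarith [hxd, mul_pos (neg_pos.2 hcneg) (sub_pos.2 hcon)]
              have h3 : Real.log P ≤ -θ * Real.log w := by
                rw [← hlog]
                exact Real.log_le_log hPpos h2
              rw [hchain, div_le_iff_of_neg hθneg]
              nlinarith
            · intro h
              rw [hchain, div_le_iff_of_neg hθneg] at h
              have h3 : Real.log P ≤ -θ * Real.log w := by nlinarith
              have h2 : P ≤ w ^ (-θ) := by
                rw [← Real.exp_log hPpos, ← Real.exp_log hrp]
                apply Real.exp_le_exp.2
                rw [hlog]
                exact h3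
              nlinarith [hxd, mul_nonneg (neg_nonneg.2 hcneg.le) (sub_nonneg.2 h2)]
          · -- θ > 0, c > 0
            have hcpos : 0 < c := by nlinarith
            constructor
            · intro h
              have h2 : w ^ (-θ) ≤ P := by
                by_contra hcon
                push_neg at hcon
                nlinarith [hxd, mul_pos hcpos (sub_pos.2 hcon)]
              have h3 : -θ * Real.log w ≤ Real.log P := by
                rw [← hlog]
                exact Real.log_le_log hrp h2
              rw [hchain, div_le_iff₀ hθpos]
              nlinarith
            · intro h
              rw [hchain, div_le_iff₀ hθpos] at h
              have h3 : -θ * Real.log w ≤ Real.log P := by nlinarith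
              have h2 : w ^ (-θ) ≤ P := by
                rw [← Real.exp_log hPpos, ← Real.exp_log hrp]
                apply Real.exp_le_exp.2
                rw [hlog]
                exact h3
              nlinarith [hxd, mul_nonneg hcpos.le (sub_nonneg.2 h2)]
        have hGx : G x = ψ (w0 ^ (1/ρ)) := by
          apply Archimax.G_from_V hψ hstrict hψinv hρ hw0pos.le (hG.2.2.2.2 x)
          exact hVx
        rw [hHdef, if_pos hPpos, show (-1/θ : ℝ) = -(1/θ) from by ring]
        rw [if_neg (Real.exp_ne_zero _), Real.log_exp, neg_neg]
        exact hGx
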